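/- arXiv:1311.3680 — 5 statements merged into one kernel-verified Lean document; each statement's English description precedes it below -/
import Mathlib

section
/- For n ≥ 1, sptbar(n) is odd if and only if n is a perfect square or twice a perfect square. -/
open scoped Classical

/-- The number of smallest parts of a multiset of positive integers
(the multiplicity of the minimum; `0` for the empty multiset). -/
noncomputable def numSmallest (M : Multiset ℕ) : ℕ :=
  (M.filter fun a => ∀ b ∈ M, a ≤ b).card

/-- `sptbar n` : the total number of smallest parts, summed over all overpartitions of `n`
whose smallest part is not overlined. -/
noncomputable def sptbar (n : ℕ) : ℕ :=
  ∑ p : Nat.Partition n, ∑ S ∈ p.parts.toFinset.powerset,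
    if ∀ a ∈ S, ∃ b ∈ p.parts, b < a then numSmallest p.parts else 0

theorem isSquare_iff_fact (m : ℕ) (hm : m ≠ 0) :
    IsSquare m ↔ ∀ p, Even (m.factorization p) := by
  constructor
  · rintro ⟨k, rfl⟩ p
    rw [← sq, Nat.factorization_pow]
    simpa using even_two_mul (k.factorization p)
  · intro h
    refine ⟨m.factorization.prod fun p e => p ^ (e / 2), ?_⟩
    conv_lhs => rw [← Nat.factorization_prod_pow_eq_self hm]
    rw [← Finsupp.prod_mul]
    apply Finsupp.prod_congr
    intro p hp
    rw [← pow_add]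
    congr 1
    have := (h p).two_dvd
    omega

lemma numSmallest_replicate (m d : ℕ) : numSmallest (Multiset.replicate m d) = m := by
  unfold numSmallest
  rw [Multiset.filter_eq_self.2, Multiset.card_replicate]
  intro a ha b hb
  rw [Multiset.eq_of_mem_replicate ha, Multiset.eq_of_mem_replicate hb]

/-- The partition of `n` into `n / d` copies of `d` (for `d` a divisor of `n`). -/
noncomputable def uniPart (n d : ℕ) : Nat.Partition n :=
  if h : d ∈ n.divisors then
    { parts := Multiset.replicate (n / d) d
      parts_pos := fun hi => by
        rw [Multiset.eq_of_mem_replicate hi]; exact Nat.pos_of_mem_divisors h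
      parts_sum := by
        rw [Multiset.sum_replicate, smul_eq_mul,
          Nat.div_mul_cancel (Nat.mem_divisors.1 h).1] }
  else Nat.Partition.ofSums n {n} (by simp)

lemma inner_eq (n : ℕ) (hn : 1 ≤ n) (p : Nat.Partition n) :
    (∑ S ∈ p.parts.toFinset.powerset,
      if ∀ a ∈ S, ∃ b ∈ p.parts, b < a then numSmallest p.parts else 0)
    = 2 ^ (p.parts.toFinset.card - 1) * numSmallest p.parts := by
  have hne : p.parts ≠ 0 := by
    intro h
    have := p.parts_sum
    rw [h] at this
    simp at this
    omega
  set T := p.parts.toFinset with hT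
  have hTne : T.Nonempty := by
    rw [hT, Multiset.toFinset_nonempty]
    exact hne
  set μ := T.min' hTne with hμ
  have hμP : μ ∈ p.parts := Multiset.mem_toFinset.1 (T.min'_mem hTne)
  have key : ∀ S ∈ T.powerset, ((∀ a ∈ S, ∃ b ∈ p.parts, b < a) ↔ S ⊆ T.erase μ) := by
    intro S hS
    rw [Finset.mem_powerset] at hS
    constructor
    · intro h a ha
      rw [Finset.mem_erase]
      refine ⟨?_, hS ha⟩
      obtain ⟨b, hb, hba⟩ := h a ha
      intro haμ
      have := T.min'_le b (Multiset.mem_toFinset.2 hb)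
      rw [← hμ] at this
      omega
    · intro h a ha
      have h2 := h ha
      rw [Finset.mem_erase] at h2
      exact ⟨μ, hμP, lt_of_le_of_ne (T.min'_le a (hS ha)) (Ne.symm h2.1)⟩
  have hfil : T.powerset.filter (fun S => S ⊆ T.erase μ) = (T.erase μ).powerset := by
    ext S
    simp only [Finset.mem_filter, Finset.mem_powerset]
    exact ⟨fun h => h.2, fun h => ⟨h.trans (Finset.erase_subset _ _), h⟩⟩
  calc (∑ S ∈ T.powerset,
      if ∀ a ∈ S, ∃ b ∈ p.parts, b < a then numSmallest p.parts else 0)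
      = ∑ S ∈ T.powerset, if S ⊆ T.erase μ then numSmallest p.parts else 0 :=
        Finset.sum_congr rfl (fun S hS => if_congr (key S hS) rfl rfl)
    _ = ∑ _S ∈ T.powerset.filter (fun S => S ⊆ T.erase μ), numSmallest p.parts :=
        (Finset.sum_filter _ _).symm
    _ = 2 ^ (T.card - 1) * numSmallest p.parts := by
        rw [hfil, Finset.sum_const, Finset.card_powerset,
          Finset.card_erase_of_mem (T.min'_mem hTne), smul_eq_mul]

lemma onePart_facts (n : ℕ) (hn : 1 ≤ n) (p : Nat.Partition n)
    (hp : p.parts.toFinset.card = 1) :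
    n / p.parts.card ∈ n.divisors ∧ uniPart n (n / p.parts.card) = p ∧
      numSmallest p.parts = n / (n / p.parts.card) := by
  obtain ⟨d, hd⟩ := Finset.card_eq_one.1 hp
  have hrep : p.parts = Multiset.replicate p.parts.card d := by
    rw [Multiset.eq_replicate_card]
    intro b hb
    have hb' := Multiset.mem_toFinset.2 hb
    rw [hd] at hb'
    simpa using hb'
  have hsum : p.parts.card * d = n := by
    have := p.parts_sum
    rw [hrep] at this
    simpa [Multiset.sum_replicate] using this
  have hdpos : 0 < d := p.parts_pos (Multiset.mem_toFinset.1 (hd ▸ Finset.mem_singleton_self d))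
  have hcpos : 0 < p.parts.card := by
    rcases Nat.eq_zero_or_pos p.parts.card with h | h
    · rw [h, zero_mul] at hsum; omega
    · exact h
  have hi : n / p.parts.card = d :=
    Nat.div_eq_of_eq_mul_right hcpos hsum.symm
  have hdvd : d ∣ n := ⟨p.parts.card, by rw [mul_comm]; exact hsum.symm⟩
  have hmem : d ∈ n.divisors := Nat.mem_divisors.2 ⟨hdvd, by omega⟩
  have hnd : n / d = p.parts.card :=
    Nat.div_eq_of_eq_mul_right hdpos (by rw [mul_comm]; exact hsum.symm)
  refine ⟨hi ▸ hmem, ?_, ?_⟩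
  · rw [hi]
    unfold uniPart
    rw [dif_pos hmem]
    apply Nat.Partition.ext
    show Multiset.replicate (n / d) d = p.parts
    rw [hnd]
    exact hrep.symm
  · rw [hi, hnd]
    conv_lhs => rw [hrep]
    rw [numSmallest_replicate]

lemma sptbar_cast (n : ℕ) (hn : 1 ≤ n) :
    (sptbar n : ZMod 2) = ((∑ d ∈ n.divisors, n / d : ℕ) : ZMod 2) := by
  unfold sptbar
  rw [Nat.cast_sum, Nat.cast_sum]
  have step1 : ∀ p : Nat.Partition n,
      ((∑ S ∈ p.parts.toFinset.powerset,
        if ∀ a ∈ S, ∃ b ∈ p.parts, b < a then numSmallest p.parts else 0 : ℕ) : ZMod 2)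
      = if p.parts.toFinset.card = 1 then ((numSmallest p.parts : ℕ) : ZMod 2) else 0 := by
    intro p
    rw [inner_eq n hn p, Nat.cast_mul, Nat.cast_pow]
    have hne : p.parts ≠ 0 := by
      intro h
      have hs := p.parts_sum
      rw [h] at hs; simp at hs; omega
    have hc : 1 ≤ p.parts.toFinset.card :=
      Finset.card_pos.2 (Multiset.toFinset_nonempty.2 hne)
    by_cases h1 : p.parts.toFinset.card = 1
    · rw [if_pos h1, h1]
      simp
    · rw [if_neg h1]
      have h2 : ((2:ℕ) : ZMod 2) = 0 := by decide
      rw [h2, zero_pow (by omega), zero_mul]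
  rw [Finset.sum_congr rfl (fun p _ => step1 p), ← Finset.sum_filter]
  refine Finset.sum_nbij' (i := fun p => n / p.parts.card) (j := uniPart n)
    ?_ ?_ ?_ ?_ ?_
  · intro p hp
    exact (onePart_facts n hn p (Finset.mem_filter.1 hp).2).1
  · intro d hd
    rw [Finset.mem_filter]
    refine ⟨Finset.mem_univ _, ?_⟩
    have hdvd := (Nat.mem_divisors.1 hd).1
    have hn0 := (Nat.mem_divisors.1 hd).2
    have hdpos := Nat.pos_of_mem_divisors hd
    have hndpos : 0 < n / d := Nat.div_pos (Nat.le_of_dvd (by omega) hdvd) hdpos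
    apply Finset.card_eq_one.2
    refine ⟨d, ?_⟩
    unfold uniPart
    rw [dif_pos hd]
    ext x
    simp [Multiset.mem_replicate, hndpos.ne']
  · intro p hp
    exact (onePart_facts n hn p (Finset.mem_filter.1 hp).2).2.1
  · intro d hd
    have hdvd := (Nat.mem_divisors.1 hd).1
    have hn0 := (Nat.mem_divisors.1 hd).2
    unfold uniPart
    rw [dif_pos hd]
    simp only [Multiset.card_replicate]
    exact Nat.div_div_self hdvd hn0
  · intro p hp
    rw [(onePart_facts n hn p (Finset.mem_filter.1 hp).2).2.2]

lemma filter_odd_divisors (n : ℕ) (hn : n ≠ 0) :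
    n.divisors.filter (fun d => Odd d) = (ordCompl[2] n).divisors := by
  ext d
  simp only [Finset.mem_filter, Nat.mem_divisors]
  constructor
  · rintro ⟨⟨hdn, -⟩, hodd⟩
    refine ⟨?_, (Nat.ordCompl_pos 2 hn).ne'⟩
    have hco : Nat.Coprime d (2 ^ n.factorization 2) :=
      Nat.Coprime.pow_right _ hodd.coprime_two_right
    exact hco.dvd_of_dvd_mul_left (by rwa [Nat.ordProj_mul_ordCompl_eq_self])
  · rintro ⟨hdm, -⟩
    refine ⟨⟨hdm.trans (Nat.ordCompl_dvd n 2), hn⟩, ?_⟩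
    rcases Nat.even_or_odd d with he | ho
    · exact absurd (dvd_trans he.two_dvd hdm)
        (Nat.not_dvd_ordCompl Nat.prime_two hn)
    · exact ho

lemma odd_card_divisors (m : ℕ) (hm : m ≠ 0) :
    Odd m.divisors.card ↔ IsSquare m := by
  rw [Nat.card_divisors hm, isSquare_iff_fact m hm]
  rw [Nat.not_even_iff_odd.symm, even_iff_two_dvd]
  rw [Prime.dvd_finset_prod_iff Nat.prime_two.prime]
  constructor
  · intro h p
    by_cases hp : p ∈ m.primeFactors
    · have h2 : ¬ 2 ∣ m.factorization p + 1 := fun hd => h ⟨p, hp, hd⟩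
      rw [Nat.even_iff]
      omega
    · rw [← Nat.support_factorization] at hp
      rw [Finsupp.notMem_support_iff.1 hp]
      exact Even.zero
  · rintro h ⟨p, hp, hdvd⟩
    have := (h p).two_dvd
    omega

lemma sum_divisors_cast (n : ℕ) (hn : n ≠ 0) :
    ((∑ d ∈ n.divisors, d : ℕ) : ZMod 2) = (((ordCompl[2] n).divisors.card : ℕ) : ZMod 2) := by
  rw [Nat.cast_sum, ← filter_odd_divisors n hn]
  rw [Finset.sum_congr rfl (fun d _ => show ((d:ℕ) : ZMod 2) = if Odd d then 1 else 0 from ?_)]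
  · rw [Finset.sum_boole]
  · by_cases hd : Odd d
    · rw [if_pos hd, ZMod.natCast_eq_one_iff_odd.2 hd]
    · rw [if_neg hd, ZMod.natCast_eq_zero_iff_even.2 (Nat.not_odd_iff_even.1 hd)]

lemma isSquare_ordCompl_iff (n : ℕ) (hn : n ≠ 0) :
    IsSquare (ordCompl[2] n) ↔ (∃ k, n = k ^ 2) ∨ (∃ k, n = 2 * k ^ 2) := by
  rw [isSquare_iff_fact _ (Nat.ordCompl_pos 2 hn).ne']
  have herase : ∀ p, (ordCompl[2] n).factorization p = if p = 2 then 0 else n.factorization p := by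
    intro p
    rw [Nat.factorization_ordCompl]
    by_cases hp : p = 2
    · simp [hp]
    · rw [Finsupp.erase_ne hp, if_neg hp]
  constructor
  · intro h
    by_cases he : Even (n.factorization 2)
    · left
      obtain ⟨k, hk⟩ := (isSquare_iff_fact n hn).2 (fun p => by
        by_cases hp : p = 2
        · rw [hp]; exact he
        · have := h p; rw [herase p, if_neg hp] at this; exact this)
      exact ⟨k, by rw [hk, sq]⟩
    · right
      obtain ⟨a, ha⟩ := (isSquare_iff_fact _ (Nat.ordCompl_pos 2 hn).ne').2 h
      rw [Nat.not_even_iff_odd] at he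
      obtain ⟨t, ht⟩ := he
      refine ⟨2 ^ t * a, ?_⟩
      have hself := Nat.ordProj_mul_ordCompl_eq_self n 2
      rw [← hself, ha, ht]
      ring
  · rintro (⟨k, rfl⟩ | ⟨k, rfl⟩) p
    · rw [herase p]
      by_cases hp : p = 2
      · rw [if_pos hp]; exact Even.zero
      · rw [if_neg hp, Nat.factorization_pow]
        simpa using even_two_mul (k.factorization p)
    · rw [herase p]
      by_cases hp : p = 2
      · rw [if_pos hp]; exact Even.zero
      · rw [if_neg hp]
        have hk : k ≠ 0 := by rintro rfl; simp at hn
        rw [Nat.factorization_mul two_ne_zero (pow_ne_zero 2 hk), Finsupp.add_apply,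
          Nat.Prime.factorization Nat.prime_two, Finsupp.single_apply,
          if_neg (fun h => hp h.symm), Nat.factorization_pow]
        simpa using even_two_mul (k.factorization p)

theorem sptbar_odd_iff (n : ℕ) (hn : 1 ≤ n) :
    Odd (sptbar n) ↔ (∃ k, n = k ^ 2) ∨ (∃ k, n = 2 * k ^ 2) := by
  have hn0 : n ≠ 0 := by omega
  rw [← ZMod.natCast_eq_one_iff_odd, sptbar_cast n hn,
    show (∑ d ∈ n.divisors, n / d) = ∑ d ∈ n.divisors, d from Nat.sum_div_divisors n id,
    sum_divisors_cast n hn0, ZMod.natCast_eq_one_iff_odd,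
    odd_card_divisors _ (Nat.ordCompl_pos 2 hn0).ne', isSquare_ordCompl_iff n hn0]
end

section
/- For n ≥ 1, the generating function identity ∏_{j≥n+1} (1+q^j) = 1 / ((1-q^{n+1})(1-q^{n+2})···(1-q^{2n}) · ∏_{k≥0} (1-q^{2n+1+2k})) holds as an identity of formal power series in q. -/
set_option maxHeartbeats 1000000

open PowerSeries

/-- The infinite product `∏_{j≥0} f j` of power series, where the `j`-th factor is assumed
to be of the form `1 + (terms of order > j)`; under this assumption the coefficient of
`q^d` only involves the factors with index `≤ d`, so the product may be (and is here)
defined coefficientwise by truncation. -/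
noncomputable def pprod (f : ℕ → PowerSeries ℚ) : PowerSeries ℚ :=
  PowerSeries.mk fun d => PowerSeries.coeff d (∏ j ∈ Finset.range (d + 1), f j)

namespace EulerAux

/-- Two power series agree in all coefficients up to degree `d`. -/
def EqUpTo (d : ℕ) (f g : PowerSeries ℚ) : Prop :=
  ∀ i ≤ d, coeff i f = coeff i g

lemma EqUpTo.refl (d : ℕ) (f : PowerSeries ℚ) : EqUpTo d f f := fun _ _ => rfl

lemma EqUpTo.mul {d : ℕ} {f f' g g' : PowerSeries ℚ}
    (hf : EqUpTo d f f') (hg : EqUpTo d g g') : EqUpTo d (f * g) (f' * g') := by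
  intro i hi
  rw [coeff_mul, coeff_mul]
  refine Finset.sum_congr rfl fun p hp => ?_
  rw [Finset.HasAntidiagonal.mem_antidiagonal] at hp
  rw [hf p.1 (by omega), hg p.2 (by omega)]

lemma EqUpTo.prod_one {d : ℕ} {s : Finset ℕ} {f : ℕ → PowerSeries ℚ}
    (h : ∀ j ∈ s, EqUpTo d (f j) 1) : EqUpTo d (∏ j ∈ s, f j) 1 := by
  classical
  induction s using Finset.induction with
  | empty => intro i hi; simp
  | @insert a s hx ih =>
      rw [Finset.prod_insert hx]
      have h1 := (h a (Finset.mem_insert_self _ _)).mul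
        (ih fun j hj => h j (Finset.mem_insert_of_mem hj))
      rw [mul_one] at h1
      exact h1

lemma coeff_prod_range (f : ℕ → PowerSeries ℚ)
    (hf : ∀ j, EqUpTo j (f j) 1) (i m : ℕ) (him : i < m) :
    coeff i (∏ j ∈ Finset.range m, f j) = coeff i (∏ j ∈ Finset.range (i + 1), f j) := by
  rw [← Finset.prod_range_mul_prod_Ico f (show i + 1 ≤ m by omega)]
  have h2 : EqUpTo i (∏ j ∈ Finset.Ico (i + 1) m, f j) 1 := by
    refine EqUpTo.prod_one fun j hj => fun i' hi' => ?_
    rw [Finset.mem_Ico] at hj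
    exact hf j i' (by omega)
  have := (EqUpTo.refl i (∏ j ∈ Finset.range (i + 1), f j)).mul h2
  rw [mul_one] at this
  exact this i le_rfl

/-- Split a product over `Ioc (2n) (2L)` into odd and even indices. -/
lemma prod_split (f : ℕ → PowerSeries ℚ) (n L : ℕ) (h : n ≤ L) :
    ∏ j ∈ Finset.Ioc (2 * n) (2 * L), f j =
      (∏ k ∈ Finset.range (L - n), f (2 * n + 1 + 2 * k)) *
        ∏ j ∈ Finset.Ioc n L, f (2 * j) := by
  induction L with
  | zero =>
      interval_cases n
      simp
  | succ L ih =>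
      rcases Nat.lt_or_ge n (L + 1) with hL | hL
      · have hnL : n ≤ L := by omega
        have e1 : 2 * (L + 1) = (2 * L + 1) + 1 := by omega
        rw [e1, ← Finset.Icc_add_one_left_eq_Ioc, Finset.prod_Icc_succ_top (by omega),
          ← Finset.Icc_add_one_left_eq_Ioc]
        rw [show 2 * L + 1 = (2 * L) + 1 from rfl, Finset.prod_Icc_succ_top (by omega)]
        rw [Finset.Icc_add_one_left_eq_Ioc, ih hnL]
        have e2 : L + 1 - n = (L - n) + 1 := by omega
        rw [e2, Finset.prod_range_succ]
        rw [← Finset.Icc_add_one_left_eq_Ioc, Finset.prod_Icc_succ_top (by omega), Finset.Icc_add_one_left_eq_Ioc]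
        have e3 : 2 * n + 1 + 2 * (L - n) = 2 * L + 1 := by omega
        have e4 : 2 * (L + 1) = 2 * L + 1 + 1 := by omega
        rw [e3, e4]
        ring
      · have : n = L + 1 := by omega
        subst this
        simp
end EulerAux

open EulerAux

/-- For `n ≥ 1`,
`∏_{j≥n+1} (1+q^j) = 1/((1-q^{n+1})⋯(1-q^{2n}) · ∏_{k≥0} (1-q^{2n+1+2k}))`
as formal power series in `q`. -/
theorem euler_extension_gen_fun (n : ℕ) (hn : 1 ≤ n) :
    pprod (fun j => 1 + (X : PowerSeries ℚ) ^ (n + 1 + j)) =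
      ((∏ j ∈ Finset.Icc (n + 1) (2 * n), (1 - (X : PowerSeries ℚ) ^ j)) *
        pprod (fun k => 1 - (X : PowerSeries ℚ) ^ (2 * n + 1 + 2 * k)))⁻¹ := by
  classical
  set fA : ℕ → PowerSeries ℚ := fun j => 1 + (X : PowerSeries ℚ) ^ (n + 1 + j) with hfA
  set fC : ℕ → PowerSeries ℚ := fun k => 1 - (X : PowerSeries ℚ) ^ (2 * n + 1 + 2 * k) with hfC
  set B : PowerSeries ℚ := ∏ j ∈ Finset.Icc (n + 1) (2 * n), (1 - (X : PowerSeries ℚ) ^ j)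
    with hB
  -- small coefficients of the factors
  have hAsmall : ∀ j, EqUpTo j (fA j) 1 := by
    intro j i hi
    have hne : i ≠ n + 1 + j := by omega
    simp [hfA, coeff_X_pow, hne]
  have hCsmall : ∀ k, EqUpTo k (fC k) 1 := by
    intro k i hi
    have hne : i ≠ 2 * n + 1 + 2 * k := by omega
    simp [hfC, coeff_X_pow, hne]
  -- constant coefficients
  have hcB : constantCoeff B = 1 := by
    rw [hB, map_prod]
    refine Finset.prod_eq_one fun j hj => ?_
    rw [Finset.mem_Icc] at hj
    have hj0 : j ≠ 0 := by omega
    rw [map_sub, map_one, map_pow, constantCoeff_X, zero_pow hj0, sub_zero]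
  have hcC : constantCoeff (pprod fC) = 1 := by
    rw [← coeff_zero_eq_constantCoeff_apply, pprod, coeff_mk, Finset.prod_range_one, hfC]
    have h0 : (0 : ℕ) ≠ 2 * n + 1 + 2 * 0 := by omega
    simp [coeff_X_pow, h0]
  have hBC : constantCoeff (B * pprod fC) ≠ 0 := by
    rw [map_mul, hcB, hcC]; norm_num
  rw [PowerSeries.eq_inv_iff_mul_eq_one hBC]
  ext d
  -- truncations
  set L : ℕ := n + d + 1 with hLdef
  set m : ℕ := n + 2 * d + 2 with hmdef
  set Am : PowerSeries ℚ := ∏ j ∈ Finset.range m, fA j with hAm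
  set Ct : PowerSeries ℚ := ∏ k ∈ Finset.range (d + 1), fC k with hCt
  have h1 : EqUpTo d (pprod fA) Am := by
    intro i hi
    rw [pprod, coeff_mk, hAm]
    exact (coeff_prod_range fA hAsmall i m (by omega)).symm
  have h2 : EqUpTo d (pprod fC) Ct := by
    intro i hi
    rw [pprod, coeff_mk, hCt]
    exact (coeff_prod_range fC hCsmall i (d + 1) (by omega)).symm
  have hcongr : EqUpTo d (pprod fA * (B * pprod fC)) (Am * (B * Ct)) :=
    h1.mul ((EqUpTo.refl d B).mul h2)
  -- the finite algebraic identity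
  set E : PowerSeries ℚ := ∏ j ∈ Finset.Ioc n L, (1 - (X : PowerSeries ℚ) ^ (2 * j)) with hE
  set R : PowerSeries ℚ := ∏ j ∈ Finset.Ioc L (2 * L), (1 - (X : PowerSeries ℚ) ^ (2 * j))
    with hR
  have hAmIoc : Am = ∏ j ∈ Finset.Ioc n (2 * L), (1 + (X : PowerSeries ℚ) ^ j) := by
    rw [hAm, ← Finset.Icc_add_one_left_eq_Ioc, ← Finset.Ico_add_one_right_eq_Icc, Finset.prod_Ico_eq_prod_range]
    rw [show 2 * L + 1 - (n + 1) = m from by omega]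
  have hCE : Ct * E = ∏ j ∈ Finset.Ioc (2 * n) (2 * L), (1 - (X : PowerSeries ℚ) ^ j) := by
    have hs := prod_split (fun j => 1 - (X : PowerSeries ℚ) ^ j) n L (by omega)
    rw [show L - n = d + 1 from by omega] at hs
    rw [hs, hCt]
  have hBCE : B * (Ct * E) = ∏ j ∈ Finset.Ioc n (2 * L), (1 - (X : PowerSeries ℚ) ^ j) := by
    rw [hCE, hB,
      show Finset.Icc (n + 1) (2 * n) = Finset.Ioc n (2 * n) from Finset.Icc_add_one_left_eq_Ioc n (2 * n)]
    exact Finset.prod_Ioc_consecutive (fun j => 1 - (X : PowerSeries ℚ) ^ j)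
      (show n ≤ 2 * n by omega) (show 2 * n ≤ 2 * L by omega)
  have key : Am * (B * Ct) * E = E * R := by
    have lhs : Am * (B * Ct) * E =
        ∏ j ∈ Finset.Ioc n (2 * L), (1 - (X : PowerSeries ℚ) ^ (2 * j)) := by
      have : Am * (B * Ct) * E = Am * (B * (Ct * E)) := by ring
      rw [this, hBCE, hAmIoc, ← Finset.prod_mul_distrib]
      refine Finset.prod_congr rfl fun j _ => ?_
      have hsq : ((X : PowerSeries ℚ) ^ j) ^ 2 = (X : PowerSeries ℚ) ^ (2 * j) := by
        rw [← pow_mul, mul_comm]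
      calc (1 + (X : PowerSeries ℚ) ^ j) * (1 - (X : PowerSeries ℚ) ^ j)
          = 1 - ((X : PowerSeries ℚ) ^ j) ^ 2 := by ring
        _ = 1 - (X : PowerSeries ℚ) ^ (2 * j) := by rw [hsq]
    rw [lhs, hE, hR]
    exact (Finset.prod_Ioc_consecutive _ (by omega) (by omega)).symm
  have hEunit : IsUnit E := by
    rw [PowerSeries.isUnit_iff_constantCoeff]
    have : constantCoeff E = 1 := by
      rw [hE, map_prod]
      refine Finset.prod_eq_one fun j hj => ?_
      rw [Finset.mem_Ioc] at hj
      have hj0 : 2 * j ≠ 0 := by omega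
      rw [map_sub, map_one, map_pow, constantCoeff_X, zero_pow hj0, sub_zero]
    rw [this]; exact isUnit_one
  have hfin : Am * (B * Ct) = R := by
    refine hEunit.mul_right_cancel ?_
    rw [key, mul_comm E R]
  have hRone : EqUpTo d R 1 := by
    refine EqUpTo.prod_one fun j hj => fun i hi => ?_
    rw [Finset.mem_Ioc] at hj
    have hne : i ≠ 2 * j := by omega
    simp [coeff_X_pow, hne]
  rw [hcongr d le_rfl, hfin, hRone d le_rfl]
end

section
/- sptbar(n) equals the number of pairs of partitions (λ₁, λ₂) with |λ₁| + |λ₂| = n, λ₁ nonempty, s(λ₁) ≤ s(λ₂) (where s denotes the smallest part, with s of the empty partition = ∞), and all parts of λ₂ that are ≥ 2·s(λ₁)+1 are odd. -/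
open scoped Classical

def glcore (s k : ℕ) : ℕ :=
  if 2 * s < k ∧ 2 ∣ k then glcore s (k / 2) else k
termination_by k
decreasing_by exact Nat.div_lt_self (by omega) one_lt_two

def glexp (s k : ℕ) : ℕ :=
  if 2 * s < k ∧ 2 ∣ k then glexp s (k / 2) + 1 else 0
termination_by k
decreasing_by exact Nat.div_lt_self (by omega) one_lt_two

theorem glcore_spec (s k : ℕ) : 2 ^ glexp s k * glcore s k = k := by
  induction k using Nat.strong_induction_on with
  | _ k ih =>
    rw [glcore, glexp]
    by_cases h : 2 * s < k ∧ 2 ∣ k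
    · rw [if_pos h, if_pos h]
      have hk2 : k / 2 < k := Nat.div_lt_self (by omega) one_lt_two
      have := ih _ hk2
      rw [pow_succ, mul_comm (2 ^ glexp s (k/2)) 2, mul_assoc, this]
      omega
    · simp [h]

theorem glcore_le (s k : ℕ) (h : s ≤ k) : s ≤ glcore s k := by
  induction k using Nat.strong_induction_on with
  | _ k ih =>
    rw [glcore]
    by_cases hc : 2 * s < k ∧ 2 ∣ k
    · simp only [hc, if_true]
      exact ih _ (Nat.div_lt_self (by omega) one_lt_two) (by omega)
    · simpa [hc] using h

theorem glcore_lt (s k : ℕ) (h : s < k) : s < glcore s k := by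
  induction k using Nat.strong_induction_on with
  | _ k ih =>
    rw [glcore]
    by_cases hc : 2 * s < k ∧ 2 ∣ k
    · simp only [hc, if_true]
      refine ih _ (Nat.div_lt_self (by omega) one_lt_two) ?_
      obtain ⟨h1, c, hc2⟩ := hc; omega
    · simpa [hc] using h

theorem glcore_not_bad (s k : ℕ) : ¬(2 * s < glcore s k ∧ 2 ∣ glcore s k) := by
  induction k using Nat.strong_induction_on with
  | _ k ih =>
    rw [glcore]
    by_cases hc : 2 * s < k ∧ 2 ∣ k
    · simp only [hc, if_true]
      exact ih _ (Nat.div_lt_self (by omega) one_lt_two)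
    · simp [hc]

theorem glcore_pow (s u : ℕ) (hu : s < u) (hodd : 2 * s < u → ¬ 2 ∣ u) (b : ℕ) :
    glcore s (2 ^ b * u) = u ∧ glexp s (2 ^ b * u) = b := by
  induction b with
  | zero =>
    rw [glcore, glexp]
    have : ¬(2 * s < 2 ^ 0 * u ∧ 2 ∣ 2 ^ 0 * u) := by
      simp only [pow_zero, one_mul]; intro ⟨h1, h2⟩; exact hodd h1 h2
    rw [if_neg this, if_neg this]; simp
  | succ b ih =>
    have hcond : 2 * s < 2 ^ (b+1) * u ∧ 2 ∣ 2 ^ (b+1) * u := by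
      constructor
      · have : 2 * u ≤ 2 ^ (b+1) * u := Nat.mul_le_mul_right u (by
          have : 2 ^ 1 ≤ 2 ^ (b+1) := Nat.pow_le_pow_right (by norm_num) (by omega)
          simpa using this)
        omega
      · exact Dvd.dvd.mul_right (dvd_pow_self 2 (Nat.succ_ne_zero b)) u
    have hdiv : 2 ^ (b+1) * u / 2 = 2 ^ b * u := by
      rw [pow_succ, mul_comm (2^b) 2, mul_assoc]
      exact Nat.mul_div_cancel_left _ (by norm_num)
    constructor
    · rw [glcore, if_pos hcond, hdiv]; exact ih.1
    · rw [glexp, if_pos hcond, hdiv, ih.2]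

/-- Glaisher forward map: split each part `k` into `2^(glexp s k)` copies of `glcore s k`. -/
def glmap (s : ℕ) (X : Multiset ℕ) : Multiset ℕ :=
  X.bind fun k => Multiset.replicate (2 ^ glexp s k) (glcore s k)

@[simp] theorem glmap_zero (s : ℕ) : glmap s 0 = 0 := rfl

theorem glmap_add (s : ℕ) (X Y : Multiset ℕ) :
    glmap s (X + Y) = glmap s X + glmap s Y := Multiset.add_bind _ _ _

theorem glmap_cons (s : ℕ) (k : ℕ) (X : Multiset ℕ) :
    glmap s (k ::ₘ X) = Multiset.replicate (2 ^ glexp s k) (glcore s k) + glmap s X :=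
  Multiset.cons_bind _ _ _

theorem glmap_sum (s : ℕ) (X : Multiset ℕ) : (glmap s X).sum = X.sum := by
  induction X using Multiset.induction_on with
  | empty => rfl
  | cons k X ih =>
    rw [glmap_cons, Multiset.sum_add, ih, Multiset.sum_cons, Multiset.sum_replicate,
      smul_eq_mul, glcore_spec]

theorem mem_glmap (s : ℕ) (X : Multiset ℕ) (a : ℕ) :
    a ∈ glmap s X ↔ ∃ k ∈ X, a = glcore s k := by
  simp only [glmap, Multiset.mem_bind, Multiset.mem_replicate]
  constructor
  · rintro ⟨k, hk, -, rfl⟩; exact ⟨k, hk, rfl⟩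
  · rintro ⟨k, hk, rfl⟩; exact ⟨k, hk, by positivity, rfl⟩

theorem glmap_replicate (s c a : ℕ) :
    glmap s (Multiset.replicate c a) =
      Multiset.replicate (c * 2 ^ glexp s a) (glcore s a) := by
  induction c with
  | zero => simp
  | succ c ih =>
    rw [Multiset.replicate_succ, glmap_cons, ih, ← Multiset.replicate_add]
    congr 1; ring

theorem glcore_self (s : ℕ) : glcore s s = s := by
  rw [glcore, if_neg]; omega

theorem glexp_self (s : ℕ) : glexp s s = 0 := by
  rw [glexp, if_neg]; omega

theorem count_glmap (s u : ℕ) (X : Multiset ℕ) :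
    (glmap s X).count u =
      ((X.filter fun k => glcore s k = u).map fun k => 2 ^ glexp s k).sum := by
  induction X using Multiset.induction_on with
  | empty => rfl
  | cons k X ih =>
    rw [glmap_cons, Multiset.count_add, ih, Multiset.count_replicate]
    by_cases h : glcore s k = u
    · rw [Multiset.filter_cons_of_pos _ (by simpa using h), if_pos h]
      simp
    · rw [Multiset.filter_cons_of_neg _ (by simpa using h), if_neg h]
      simp

/-- Glaisher inverse map. -/
noncomputable def binv (X : Multiset ℕ) : Multiset ℕ :=
  ∑ u ∈ X.toFinset, ((X.count u).bitIndices.map fun b => 2 ^ b * u : List ℕ)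

theorem glmap_finset_sum {ι : Type*} (s : ℕ) (t : Finset ι) (f : ι → Multiset ℕ) :
    glmap s (∑ u ∈ t, f u) = ∑ u ∈ t, glmap s (f u) := by
  induction t using Finset.induction_on with
  | empty => simp
  | insert _ _ h ih => rw [Finset.sum_insert h, Finset.sum_insert h, glmap_add, ih]

theorem bind_replicate_pow (u : ℕ) (X : Multiset ℕ) :
    (X.bind fun b => Multiset.replicate (2 ^ b) u) =
      Multiset.replicate ((X.map fun b => 2 ^ b).sum) u := by
  induction X using Multiset.induction_on with
  | empty => rfl
  | cons b X ih =>
    rw [Multiset.cons_bind, ih, Multiset.map_cons, Multiset.sum_cons,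
      Multiset.replicate_add]

/-- `glmap` is a left inverse of `binv` on multisets of allowed values `> s`. -/
theorem glmap_binv (s : ℕ) (X : Multiset ℕ)
    (hX : ∀ u ∈ X, s < u ∧ (2 * s < u → ¬ 2 ∣ u)) : glmap s (binv X) = X := by
  rw [binv, glmap_finset_sum]
  have h1 : ∀ u ∈ X.toFinset,
      glmap s (((X.count u).bitIndices.map fun b => 2 ^ b * u : List ℕ) : Multiset ℕ)
        = Multiset.replicate (X.count u) u := by
    intro u hu
    obtain ⟨hu1, hu2⟩ := hX u (Multiset.mem_toFinset.mp hu)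
    rw [← Multiset.map_coe, glmap]
    rw [Multiset.bind_map]
    have : ∀ b : ℕ,
        (Multiset.replicate (2 ^ glexp s (2 ^ b * u)) (glcore s (2 ^ b * u)))
          = Multiset.replicate (2 ^ b) u := by
      intro b
      obtain ⟨hc, he⟩ := glcore_pow s u hu1 hu2 b
      rw [hc, he]
    calc (((X.count u).bitIndices : Multiset ℕ).bind fun b =>
            Multiset.replicate (2 ^ glexp s (2 ^ b * u)) (glcore s (2 ^ b * u)))
        = ((X.count u).bitIndices : Multiset ℕ).bind fun b =>
            Multiset.replicate (2 ^ b) u := by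
          exact Multiset.bind_congr (fun b _ => this b)
      _ = Multiset.replicate (((X.count u).bitIndices.map fun b => 2 ^ b).sum) u := by
          rw [bind_replicate_pow, Multiset.map_coe, Multiset.sum_coe]
      _ = Multiset.replicate (X.count u) u := by rw [Nat.twoPowSum_bitIndices]
  rw [Finset.sum_congr rfl h1]
  simp_rw [← Multiset.nsmul_singleton]
  exact Multiset.toFinset_sum_count_nsmul_eq X

theorem sum_filter_fiber (f : ℕ → ℕ) (D : Multiset ℕ) :
    ∑ u ∈ (D.map f).toFinset, D.filter (fun k => f k = u) = D := by
  ext a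
  rw [Multiset.count_sum']
  simp_rw [Multiset.count_filter]
  rw [Finset.sum_ite_eq ((D.map f).toFinset) (f a) (fun _ => D.count a)]
  by_cases ha : a ∈ D
  · rw [if_pos (Multiset.mem_toFinset.mpr (Multiset.mem_map_of_mem f ha))]
  · rw [Multiset.count_eq_zero_of_notMem ha]; simp

theorem binv_glmap (s : ℕ) (D : Multiset ℕ) (hD : D.Nodup) :
    binv (glmap s D) = D := by
  have htf : (glmap s D).toFinset = (D.map (glcore s)).toFinset := by
    ext a
    simp only [Multiset.mem_toFinset, mem_glmap, Multiset.mem_map]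
    constructor
    · rintro ⟨k, hk, rfl⟩; exact ⟨k, hk, rfl⟩
    · rintro ⟨k, hk, rfl⟩; exact ⟨k, hk, rfl⟩
  rw [binv, htf]
  have key : ∀ u ∈ (D.map (glcore s)).toFinset,
      ((((glmap s D).count u).bitIndices.map fun b => 2 ^ b * u : List ℕ) : Multiset ℕ)
        = D.filter (fun k => glcore s k = u) := by
    intro u hu
    set Du := D.filter (fun k => glcore s k = u) with hDu
    have hDunodup : Du.Nodup := hD.filter _
    have hcoreDu : ∀ k ∈ Du, glcore s k = u := fun k hk =>
      (Multiset.mem_filter.mp hk).2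
    have hself : ∀ k ∈ Du, 2 ^ glexp s k * u = k := by
      intro k hk
      rw [← hcoreDu k hk, glcore_spec]
    set E := Du.map (glexp s) with hE
    have hEnodup : E.Nodup := by
      refine hDunodup.map_on ?_
      intro k hk k' hk' hee
      rw [← hself k hk, ← hself k' hk', hee]
    set L := Multiset.sort E (· ≤ ·) with hL
    have hLE : (L : Multiset ℕ) = E := Multiset.sort_eq _ _
    have hLsorted : List.Pairwise (· < ·) L := by
      refine List.sortedLT_iff_pairwise.mp ((List.sortedLE_iff_pairwise.mpr (Multiset.pairwise_sort _ _)).sortedLT_of_nodup ?_)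
      rw [← Multiset.coe_nodup, hLE]; exact hEnodup
    have hcount : (glmap s D).count u = (L.map fun b => 2 ^ b).sum := by
      rw [count_glmap, ← hDu]
      have : Du.map (fun k => 2 ^ glexp s k) = E.map (fun b => 2 ^ b) := by
        rw [hE, Multiset.map_map]; rfl
      rw [this, ← hLE, Multiset.map_coe, Multiset.sum_coe]
    rw [hcount, Nat.bitIndices_twoPowsum (List.sortedLT_iff_pairwise.mpr hLsorted)]
    have : ((L.map fun b => 2 ^ b * u : List ℕ) : Multiset ℕ)
        = (L : Multiset ℕ).map fun b => 2 ^ b * u := by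
      rw [Multiset.map_coe]
    rw [this, hLE, hE, Multiset.map_map]
    calc Du.map (fun k => 2 ^ glexp s k * u) = Du.map id := by
          exact Multiset.map_congr rfl (fun k hk => hself k hk)
      _ = Du := Multiset.map_id Du
  rw [Finset.sum_congr rfl key]
  exact sum_filter_fiber (glcore s) D

/-! ### smallest part -/

noncomputable def smin (M : Multiset ℕ) : ℕ := sInf {a | a ∈ M}

theorem smin_mem {M : Multiset ℕ} (h : M ≠ 0) : smin M ∈ M := by
  have : {a | a ∈ M}.Nonempty := by
    obtain ⟨a, ha⟩ := Multiset.exists_mem_of_ne_zero h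
    exact ⟨a, ha⟩
  exact Nat.sInf_mem this

theorem smin_le {M : Multiset ℕ} {a : ℕ} (ha : a ∈ M) : smin M ≤ a := Nat.sInf_le ha

theorem smin_eq {M : Multiset ℕ} {s : ℕ} (hs : s ∈ M) (h : ∀ a ∈ M, s ≤ a) :
    smin M = s :=
  le_antisymm (smin_le hs) (h _ (smin_mem (by rintro rfl; simp at hs)))

theorem numSmallest_eq {M : Multiset ℕ} (h : M ≠ 0) :
    numSmallest M = M.count (smin M) := by
  rw [numSmallest]
  have h1 : M.filter (fun a => ∀ b ∈ M, a ≤ b) = M.filter (· = smin M) := by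
    refine Multiset.filter_congr (fun a ha => ?_)
    constructor
    · intro hP
      exact le_antisymm (hP _ (smin_mem h)) (smin_le ha)
    · rintro rfl b hb
      exact smin_le hb
  rw [h1, Multiset.filter_eq', Multiset.card_replicate]

theorem ne_zero_of_numSmallest_pos {M : Multiset ℕ} (h : 0 < numSmallest M) : M ≠ 0 := by
  rintro rfl
  simp [numSmallest] at h

/-- decomposition of a multiset into copies of `s` and the rest -/
theorem rep_count_add_filter (M : Multiset ℕ) (s : ℕ) :
    Multiset.replicate (M.count s) s + M.filter (· ≠ s) = M := by
  ext a
  rw [Multiset.count_add, Multiset.count_replicate, Multiset.count_filter]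
  by_cases h : a = s
  · simp [h]
  · simp [h, Ne.symm h]

theorem filter_ne_replicate (s n : ℕ) :
    (Multiset.replicate n s).filter (· ≠ s) = 0 :=
  (Multiset.filter_eq_nil (p := (· ≠ s))).mpr fun a ha => not_not.mpr (Multiset.eq_of_mem_replicate ha)

theorem nodup_finset_sum {ι : Type*} (t : Finset ι) (f : ι → Multiset ℕ)
    (h1 : ∀ u ∈ t, (f u).Nodup)
    (h2 : ∀ u ∈ t, ∀ v ∈ t, ∀ a, a ∈ f u → a ∈ f v → u = v) :
    (∑ u ∈ t, f u).Nodup := by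
  induction t using Finset.induction_on with
  | empty => simp
  | @insert u t hu ih =>
    rw [Finset.sum_insert hu]
    rw [Multiset.nodup_add]
    refine ⟨h1 u (Finset.mem_insert_self u t), ih (fun v hv => h1 v (Finset.mem_insert_of_mem hv))
      (fun v hv w hw a hav haw => h2 v (Finset.mem_insert_of_mem hv) w (Finset.mem_insert_of_mem hw) a hav haw),
      Multiset.disjoint_left.mpr ?_⟩
    intro a hau hat
    rw [Multiset.mem_sum] at hat
    obtain ⟨v, hv, hav⟩ := hat
    have := h2 u (Finset.mem_insert_self u t) v (Finset.mem_insert_of_mem hv) a hau hav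
    rw [this] at hu
    exact hu hv

theorem mem_binv {X : Multiset ℕ} {a : ℕ} (ha : a ∈ binv X) :
    ∃ u ∈ X, ∃ b, a = 2 ^ b * u := by
  rw [binv, Multiset.mem_sum] at ha
  obtain ⟨u, hu, hau⟩ := ha
  rw [Multiset.mem_coe, List.mem_map] at hau
  obtain ⟨b, _, rfl⟩ := hau
  exact ⟨u, Multiset.mem_toFinset.mp hu, b, rfl⟩

theorem binv_nodup (s : ℕ) (X : Multiset ℕ)
    (hX : ∀ u ∈ X, s < u ∧ (2 * s < u → ¬ 2 ∣ u)) : (binv X).Nodup := by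
  rw [binv]
  refine nodup_finset_sum _ _ ?_ ?_
  · intro u hu
    rw [Multiset.coe_nodup]
    refine List.Nodup.map ?_ (Nat.bitIndices_sorted.nodup)
    intro b b' hbb
    have hupos : 0 < u := by
      have := (hX u (Multiset.mem_toFinset.mp hu)).1
      omega
    exact Nat.pow_right_injective (le_refl 2) (Nat.eq_of_mul_eq_mul_right hupos hbb)
  · intro u hu v hv a hau hav
    rw [Multiset.mem_coe, List.mem_map] at hau hav
    obtain ⟨b, _, rfl⟩ := hau
    obtain ⟨b', hb', he⟩ := hav
    obtain ⟨h1, h2⟩ := hX u (Multiset.mem_toFinset.mp hu)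
    obtain ⟨h1', h2'⟩ := hX v (Multiset.mem_toFinset.mp hv)
    have := (glcore_pow s u h1 h2 b).1
    have h4 := (glcore_pow s v h1' h2' b').1
    rw [← this, ← he, h4]

/-! ### The main bijection -/

def TCond (n : ℕ) (q : Multiset ℕ × Finset ℕ × ℕ) : Prop :=
  (∀ a ∈ q.1, 0 < a) ∧ q.1.sum = n ∧ q.2.1 ⊆ q.1.toFinset ∧
    (∀ a ∈ q.2.1, ∃ b ∈ q.1, b < a) ∧ q.2.2 < numSmallest q.1

def PCond (n : ℕ) (P : Multiset ℕ × Multiset ℕ) : Prop :=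
  (∀ a ∈ P.1, 0 < a) ∧ (∀ a ∈ P.2, 0 < a) ∧ P.1 ≠ 0 ∧
    P.1.sum + P.2.sum = n ∧
    ∃ s ∈ P.1, (∀ a ∈ P.1, s ≤ a) ∧ (∀ b ∈ P.2, s ≤ b) ∧
      (∀ b ∈ P.2, 2 * s + 1 ≤ b → Odd b)

noncomputable def Fraw (q : Multiset ℕ × Finset ℕ × ℕ) : Multiset ℕ × Multiset ℕ :=
  (Multiset.replicate (q.2.2 + 1) (smin q.1) +
      (q.1.filter (· ≠ smin q.1) - q.2.1.val),
   Multiset.replicate (q.1.count (smin q.1) - q.2.2 - 1) (smin q.1) +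
      glmap (smin q.1) q.2.1.val)

noncomputable def Graw (P : Multiset ℕ × Multiset ℕ) : Multiset ℕ × Finset ℕ × ℕ :=
  (Multiset.replicate (P.1.count (smin P.1) + P.2.count (smin P.1)) (smin P.1) +
      P.1.filter (· ≠ smin P.1) + binv (P.2.filter (· ≠ smin P.1)),
   (binv (P.2.filter (· ≠ smin P.1))).toFinset, P.1.count (smin P.1) - 1)

section TFacts

variable {n : ℕ} {M : Multiset ℕ} {S : Finset ℕ} {j : ℕ}

theorem tfacts (h : TCond n (M, S, j)) :
    M ≠ 0 ∧ 0 < smin M ∧ j + 1 ≤ M.count (smin M) ∧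
      (∀ a ∈ S, smin M < a ∧ a ∈ M) ∧ S.val ≤ M.filter (· ≠ smin M) := by
  obtain ⟨hpos, hsum, hsub, hcond, hj⟩ := h
  have hpos' : ∀ a ∈ M, 0 < a := hpos
  have hsub' : S ⊆ M.toFinset := hsub
  have hcond' : ∀ a ∈ S, ∃ b ∈ M, b < a := hcond
  have hj' : j < numSmallest M := hj
  have hne : M ≠ 0 := ne_zero_of_numSmallest_pos (Nat.lt_of_le_of_lt (Nat.zero_le j) hj')
  have hs : 0 < smin M := hpos' _ (smin_mem hne)
  have hjm : j + 1 ≤ M.count (smin M) := by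
    have := numSmallest_eq hne
    omega
  have hSa : ∀ a ∈ S, smin M < a ∧ a ∈ M := by
    intro a ha
    obtain ⟨b, hb, hba⟩ := hcond' a ha
    have haM : a ∈ M := Multiset.mem_toFinset.mp (hsub' ha)
    exact ⟨lt_of_le_of_lt (smin_le hb) hba, haM⟩
  refine ⟨hne, hs, hjm, hSa, ?_⟩
  rw [Multiset.le_iff_subset S.nodup]
  intro a ha
  rw [Multiset.mem_filter]
  have ha' : a ∈ S := ha
  exact ⟨(hSa a ha').2, fun he => absurd he.symm (ne_of_lt (hSa a ha').1)⟩

theorem odd_of_not_two_dvd {b : ℕ} (h : ¬ 2 ∣ b) : Odd b := by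
  rcases Nat.even_or_odd b with he | ho
  · exact absurd he.two_dvd h
  · exact ho

theorem pcond_fraw (h : TCond n (M, S, j)) : PCond n (Fraw (M, S, j)) := by
  obtain ⟨hne, hs, hjm, hSa, hSle⟩ := tfacts h
  obtain ⟨hpos, hsum, hsub, hcond, hj⟩ := h
  have hpos' : ∀ a ∈ M, 0 < a := hpos
  have hsum' : M.sum = n := hsum
  set s := smin M with hsdef
  have hsM : s ∈ M := smin_mem hne
  have hmemL : ∀ a, a ∈ M.filter (· ≠ s) - S.val → a ∈ M ∧ a ≠ s := by
    intro a ha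
    have := Multiset.mem_of_le (Multiset.sub_le_self _ _) ha
    rw [Multiset.mem_filter] at this
    exact this
  have hmemG : ∀ a, a ∈ glmap s S.val → s < a ∧ (2 * s < a → ¬ 2 ∣ a) := by
    intro a ha
    rw [mem_glmap] at ha
    obtain ⟨k, hk, rfl⟩ := ha
    have hks : s < k := (hSa k hk).1
    exact ⟨glcore_lt s k hks, fun h2 hdvd => glcore_not_bad s k ⟨h2, hdvd⟩⟩
  show PCond n
    (Multiset.replicate (j + 1) s + (M.filter (· ≠ s) - S.val),
     Multiset.replicate (M.count s - j - 1) s + glmap s S.val)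
  rw [PCond]
  refine ⟨?_, ?_, ?_, ?_, ?_⟩
  · -- positivity of λ₁
    intro a ha
    rw [Multiset.mem_add] at ha
    rcases ha with ha | ha
    · rw [Multiset.eq_of_mem_replicate ha]; exact hs
    · exact hpos' _ (hmemL a ha).1
  · -- positivity of λ₂
    intro a ha
    rw [Multiset.mem_add] at ha
    rcases ha with ha | ha
    · rw [Multiset.eq_of_mem_replicate ha]; exact hs
    · exact lt_trans hs (hmemG a ha).1
  · -- λ₁ ≠ 0
    intro h0
    have h0' : Multiset.replicate (j + 1) s + (M.filter (· ≠ s) - S.val) = 0 := h0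
    have : s ∈ (0 : Multiset ℕ) := by
      rw [← h0', Multiset.mem_add]
      exact Or.inl (Multiset.mem_replicate.mpr ⟨Nat.succ_ne_zero j, rfl⟩)
    simp at this
  · -- sum
    have hsub_add : (M.filter (· ≠ s) - S.val) + S.val = M.filter (· ≠ s) :=
      tsub_add_cancel_of_le hSle
    have hsum1 : (M.filter (· ≠ s) - S.val).sum + S.val.sum = (M.filter (· ≠ s)).sum := by
      rw [← Multiset.sum_add, hsub_add]
    have hM : M.count s * s + (M.filter (· ≠ s)).sum = M.sum := by
      have := congrArg Multiset.sum (rep_count_add_filter M s)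
      rwa [Multiset.sum_add, Multiset.sum_replicate, smul_eq_mul] at this
    simp only [Multiset.sum_add, Multiset.sum_replicate, smul_eq_mul, glmap_sum]
    have e1 : (j + 1) * s + (M.count s - j - 1) * s = M.count s * s := by
      have e0 : (j + 1) + (M.count s - j - 1) = M.count s := by omega
      rw [← Nat.add_mul, e0]
    omega
  · -- existence of s
    refine ⟨s, ?_, ?_, ?_, ?_⟩
    · rw [Multiset.mem_add]
      exact Or.inl (Multiset.mem_replicate.mpr ⟨Nat.succ_ne_zero j, rfl⟩)
    · intro a ha
      rw [Multiset.mem_add] at ha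
      rcases ha with ha | ha
      · rw [Multiset.eq_of_mem_replicate ha]
      · exact smin_le (hmemL a ha).1
    · intro b hb
      rw [Multiset.mem_add] at hb
      rcases hb with hb | hb
      · rw [Multiset.eq_of_mem_replicate hb]
      · exact le_of_lt (hmemG b hb).1
    · intro b hb h2b
      rw [Multiset.mem_add] at hb
      rcases hb with hb | hb
      · rw [Multiset.eq_of_mem_replicate hb] at h2b
        exact absurd h2b (by omega)
      · exact odd_of_not_two_dvd ((hmemG b hb).2 (by omega))

end TFacts

section PFacts

variable {n : ℕ} {L1 L2 : Multiset ℕ}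

theorem pfacts (h : PCond n (L1, L2)) :
    smin L1 ∈ L1 ∧ 0 < smin L1 ∧ 1 ≤ L1.count (smin L1) ∧
      (∀ a ∈ L1, smin L1 ≤ a) ∧ (∀ b ∈ L2, smin L1 ≤ b) ∧
      (∀ u ∈ L2.filter (· ≠ smin L1), smin L1 < u ∧ (2 * smin L1 < u → ¬ 2 ∣ u)) := by
  obtain ⟨hpos1, hpos2, hne, hsum, s₀, hs₀, hle1, hle2, hodd⟩ := h
  have hs₀' : s₀ ∈ L1 := hs₀
  have hle1' : ∀ a ∈ L1, s₀ ≤ a := hle1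
  have hle2' : ∀ b ∈ L2, s₀ ≤ b := hle2
  have hodd' : ∀ b ∈ L2, 2 * s₀ + 1 ≤ b → Odd b := hodd
  have hpos1' : ∀ a ∈ L1, 0 < a := hpos1
  have hseq : smin L1 = s₀ := smin_eq hs₀' hle1'
  rw [hseq]
  refine ⟨hs₀', hpos1' _ hs₀', Multiset.one_le_count_iff_mem.mpr hs₀', hle1', hle2', ?_⟩
  intro u hu
  rw [Multiset.mem_filter] at hu
  obtain ⟨huL, hus⟩ := hu
  have h1 : s₀ < u := lt_of_le_of_ne (hle2' u huL) (Ne.symm hus)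
  refine ⟨h1, fun h2 hdvd => ?_⟩
  obtain ⟨c, hc⟩ := hodd' u huL (by omega)
  obtain ⟨d, hd⟩ := hdvd
  omega

theorem dfacts (h : PCond n (L1, L2)) :
    glmap (smin L1) (binv (L2.filter (· ≠ smin L1))) = L2.filter (· ≠ smin L1) ∧
      (binv (L2.filter (· ≠ smin L1))).Nodup ∧
      (∀ d ∈ binv (L2.filter (· ≠ smin L1)), smin L1 < d) := by
  obtain ⟨-, -, -, -, -, hX⟩ := pfacts h
  refine ⟨glmap_binv _ _ hX, binv_nodup _ _ hX, ?_⟩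
  intro d hd
  obtain ⟨u, hu, b, rfl⟩ := mem_binv hd
  have h1 := (hX u hu).1
  have : u ≤ 2 ^ b * u := Nat.le_mul_of_pos_left u (Nat.pow_pos (by norm_num))
  omega

theorem tcond_graw (h : PCond n (L1, L2)) : TCond n (Graw (L1, L2)) := by
  obtain ⟨hsmem, hs, hc1, hle1, hle2, hX⟩ := pfacts h
  obtain ⟨hglD, hDnodup, hDgt⟩ := dfacts h
  obtain ⟨hpos1, hpos2, hne, hsum, -⟩ := h
  have hpos1' : ∀ a ∈ L1, 0 < a := hpos1
  have hpos2' : ∀ a ∈ L2, 0 < a := hpos2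
  have hsum' : L1.sum + L2.sum = n := hsum
  set s := smin L1 with hsdef
  set D := binv (L2.filter (· ≠ s)) with hDdef
  set M' := Multiset.replicate (L1.count s + L2.count s) s + L1.filter (· ≠ s) + D
    with hM'def
  have hmemM' : ∀ a ∈ M', s ≤ a := by
    intro a ha
    rw [Multiset.mem_add, Multiset.mem_add] at ha
    rcases ha with (ha | ha) | ha
    · rw [Multiset.eq_of_mem_replicate ha]
    · exact hle1 _ (Multiset.mem_of_mem_filter ha)
    · exact le_of_lt (hDgt a ha)
  have hsM' : s ∈ M' := by
    rw [Multiset.mem_add, Multiset.mem_add]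
    exact Or.inl (Or.inl (Multiset.mem_replicate.mpr ⟨by omega, rfl⟩))
  have hsmin' : smin M' = s := smin_eq hsM' hmemM'
  have hcount' : M'.count s = L1.count s + L2.count s := by
    rw [hM'def, Multiset.count_add, Multiset.count_add, Multiset.count_replicate, if_pos rfl]
    have e1 : (L1.filter (· ≠ s)).count s = 0 := by
      rw [Multiset.count_filter, if_neg (by simp)]
    have e2 : D.count s = 0 :=
      Multiset.count_eq_zero.mpr (fun hm => lt_irrefl s (hDgt s hm))
    omega
  show TCond n (M', D.toFinset, L1.count s - 1)
  rw [TCond]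
  refine ⟨?_, ?_, ?_, ?_, ?_⟩
  · intro a ha
    rw [Multiset.mem_add, Multiset.mem_add] at ha
    rcases ha with (ha | ha) | ha
    · rw [Multiset.eq_of_mem_replicate ha]; exact hs
    · exact hpos1' _ (Multiset.mem_of_mem_filter ha)
    · exact lt_trans hs (hDgt a ha)
  · -- sum
    have hD : D.sum = (L2.filter (· ≠ s)).sum := by
      rw [← hglD, glmap_sum]
    have h1 : L1.count s * s + (L1.filter (· ≠ s)).sum = L1.sum := by
      have := congrArg Multiset.sum (rep_count_add_filter L1 s)
      rwa [Multiset.sum_add, Multiset.sum_replicate, smul_eq_mul] at this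
    have h2 : L2.count s * s + (L2.filter (· ≠ s)).sum = L2.sum := by
      have := congrArg Multiset.sum (rep_count_add_filter L2 s)
      rwa [Multiset.sum_add, Multiset.sum_replicate, smul_eq_mul] at this
    show (Multiset.replicate (L1.count s + L2.count s) s + L1.filter (· ≠ s) + D).sum = n
    rw [Multiset.sum_add, Multiset.sum_add, Multiset.sum_replicate, smul_eq_mul]
    have e3 : (L1.count s + L2.count s) * s = L1.count s * s + L2.count s * s :=
      Nat.add_mul _ _ _
    omega
  · intro a ha
    have ha' : a ∈ D.toFinset := ha
    rw [Multiset.mem_toFinset] at ha'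
    show a ∈ M'.toFinset
    rw [Multiset.mem_toFinset, hM'def, Multiset.mem_add]
    exact Or.inr ha'
  · intro a ha
    have ha' : a ∈ D.toFinset := ha
    rw [Multiset.mem_toFinset] at ha'
    exact ⟨s, hsM', hDgt a ha'⟩
  · -- index bound
    have hne' : M' ≠ 0 := fun h0 => by rw [h0] at hsM'; simp at hsM'
    show L1.count s - 1 < numSmallest M'
    rw [numSmallest_eq hne', hsmin', hcount']
    omega

theorem graw_fraw {M : Multiset ℕ} {S : Finset ℕ} {j : ℕ} (h : TCond n (M, S, j)) :
    Graw (Fraw (M, S, j)) = (M, S, j) := by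
  obtain ⟨hne, hs, hjm, hSa, hSle⟩ := tfacts h
  set s := smin M with hsdef
  set L1 := Multiset.replicate (j + 1) s + (M.filter (· ≠ s) - S.val) with hL1def
  set L2 := Multiset.replicate (M.count s - j - 1) s + glmap s S.val with hL2def
  have hmemL : ∀ a ∈ M.filter (· ≠ s) - S.val, a ∈ M ∧ a ≠ s := by
    intro a ha
    have := Multiset.mem_of_le (Multiset.sub_le_self _ _) ha
    rw [Multiset.mem_filter] at this
    exact this
  have hmemG : ∀ a ∈ glmap s S.val, s < a := by
    intro a ha
    rw [mem_glmap] at ha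
    obtain ⟨k, hk, rfl⟩ := ha
    exact glcore_lt s k (hSa k hk).1
  have hs1 : smin L1 = s := by
    refine smin_eq ?_ ?_
    · rw [Multiset.mem_add]
      exact Or.inl (Multiset.mem_replicate.mpr ⟨Nat.succ_ne_zero j, rfl⟩)
    · intro a ha
      rw [Multiset.mem_add] at ha
      rcases ha with ha | ha
      · rw [Multiset.eq_of_mem_replicate ha]
      · exact smin_le (hmemL a ha).1
  have hc1 : L1.count s = j + 1 := by
    rw [hL1def, Multiset.count_add, Multiset.count_replicate, if_pos rfl,
      Multiset.count_eq_zero.mpr (fun hm => (hmemL s hm).2 rfl)]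
  have hf1 : L1.filter (· ≠ s) = M.filter (· ≠ s) - S.val := by
    rw [hL1def, Multiset.filter_add, filter_ne_replicate, zero_add,
      Multiset.filter_eq_self.mpr (fun a ha => (hmemL a ha).2)]
  have hc2 : L2.count s = M.count s - j - 1 := by
    rw [hL2def, Multiset.count_add, Multiset.count_replicate, if_pos rfl,
      Multiset.count_eq_zero.mpr (fun hm => lt_irrefl s (hmemG s hm))]
    omega
  have hf2 : L2.filter (· ≠ s) = glmap s S.val := by
    rw [hL2def, Multiset.filter_add, filter_ne_replicate, zero_add,
      Multiset.filter_eq_self.mpr (fun a ha => Ne.symm (ne_of_lt (hmemG a ha)))]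
  have hbinv : binv (glmap s S.val) = S.val := binv_glmap s S.val S.nodup
  show (Multiset.replicate (L1.count (smin L1) + L2.count (smin L1)) (smin L1) +
      L1.filter (· ≠ smin L1) + binv (L2.filter (· ≠ smin L1)),
    (binv (L2.filter (· ≠ smin L1))).toFinset, L1.count (smin L1) - 1) = (M, S, j)
  rw [hs1, hc1, hc2, hf1, hf2, hbinv]
  refine Prod.ext ?_ (Prod.ext ?_ ?_)
  · show Multiset.replicate ((j + 1) + (M.count s - j - 1)) s +
        (M.filter (· ≠ s) - S.val) + S.val = M
    rw [show (j + 1) + (M.count s - j - 1) = M.count s from by omega, add_assoc,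
      tsub_add_cancel_of_le hSle, rep_count_add_filter]
  · show S.val.toFinset = S
    exact Finset.val_toFinset S
  · show (j + 1) - 1 = j
    omega

theorem fraw_graw {L1 L2 : Multiset ℕ} (h : PCond n (L1, L2)) :
    Fraw (Graw (L1, L2)) = (L1, L2) := by
  obtain ⟨hsmem, hs, hc1, hle1, hle2, hX⟩ := pfacts h
  obtain ⟨hglD, hDnodup, hDgt⟩ := dfacts h
  set s := smin L1 with hsdef
  set D := binv (L2.filter (· ≠ s)) with hDdef
  set M' := Multiset.replicate (L1.count s + L2.count s) s + L1.filter (· ≠ s) + D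
    with hM'def
  have hmemM' : ∀ a ∈ M', s ≤ a := by
    intro a ha
    rw [Multiset.mem_add, Multiset.mem_add] at ha
    rcases ha with (ha | ha) | ha
    · rw [Multiset.eq_of_mem_replicate ha]
    · exact hle1 _ (Multiset.mem_of_mem_filter ha)
    · exact le_of_lt (hDgt a ha)
  have hsM' : s ∈ M' := by
    rw [Multiset.mem_add, Multiset.mem_add]
    exact Or.inl (Or.inl (Multiset.mem_replicate.mpr ⟨by omega, rfl⟩))
  have hsmin' : smin M' = s := smin_eq hsM' hmemM'
  have hcount' : M'.count s = L1.count s + L2.count s := by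
    rw [hM'def, Multiset.count_add, Multiset.count_add, Multiset.count_replicate, if_pos rfl]
    have e1 : (L1.filter (· ≠ s)).count s = 0 := by
      rw [Multiset.count_filter, if_neg (by simp)]
    have e2 : D.count s = 0 :=
      Multiset.count_eq_zero.mpr (fun hm => lt_irrefl s (hDgt s hm))
    omega
  have hfM' : M'.filter (· ≠ s) = L1.filter (· ≠ s) + D := by
    rw [hM'def, Multiset.filter_add, Multiset.filter_add, filter_ne_replicate, zero_add,
      Multiset.filter_eq_self.mpr (fun a (ha : a ∈ L1.filter (· ≠ s)) =>
        (Multiset.mem_filter.mp ha).2),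
      Multiset.filter_eq_self.mpr (fun a ha => Ne.symm (ne_of_lt (hDgt a ha)))]
  have hSv : (D.toFinset).val = D := by
    rw [Multiset.toFinset_val, Multiset.dedup_eq_self.mpr hDnodup]
  show (Multiset.replicate ((L1.count s - 1) + 1) (smin M') +
      (M'.filter (· ≠ smin M') - (D.toFinset).val),
    Multiset.replicate (M'.count (smin M') - (L1.count s - 1) - 1) (smin M') +
      glmap (smin M') (D.toFinset).val) = (L1, L2)
  rw [hsmin', hcount', hfM', hSv]
  refine Prod.ext ?_ ?_
  · show Multiset.replicate ((L1.count s - 1) + 1) s +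
        (L1.filter (· ≠ s) + D - D) = L1
    rw [show (L1.count s - 1) + 1 = L1.count s from by omega, add_tsub_cancel_right,
      rep_count_add_filter]
  · show Multiset.replicate ((L1.count s + L2.count s) - (L1.count s - 1) - 1) s +
        glmap s D = L2
    rw [show (L1.count s + L2.count s) - (L1.count s - 1) - 1 = L2.count s from by omega,
      hglD, rep_count_add_filter]

end PFacts

/-! ### Counting -/

noncomputable def fset (n : ℕ) (p : Nat.Partition n) : Finset (Finset ℕ) :=
  p.parts.toFinset.powerset.filter (fun S => ∀ a ∈ S, ∃ b ∈ p.parts, b < a)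

theorem sptbar_eq_fintype_card (n : ℕ) :
    sptbar n = Fintype.card
      ((p : Nat.Partition n) × ({S // S ∈ fset n p} × Fin (numSmallest p.parts))) := by
  rw [Fintype.card_sigma, sptbar]
  refine Finset.sum_congr rfl (fun p _ => ?_)
  rw [Fintype.card_prod, Fintype.card_coe, Fintype.card_fin, fset,
    ← Finset.sum_filter, Finset.sum_const, smul_eq_mul]

noncomputable def e1 (n : ℕ) :
    ((p : Nat.Partition n) × ({S // S ∈ fset n p} × Fin (numSmallest p.parts))) ≃
      {q : Multiset ℕ × Finset ℕ × ℕ // TCond n q} where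
  toFun x := ⟨(x.1.parts, x.2.1.val, x.2.2.val),
    ⟨fun a ha => x.1.parts_pos ha, x.1.parts_sum,
      Finset.mem_powerset.mp (Finset.mem_filter.mp x.2.1.2).1,
      (Finset.mem_filter.mp x.2.1.2).2, x.2.2.2⟩⟩
  invFun q := ⟨⟨q.1.1, fun {i} hi => q.2.1 i hi, q.2.2.1⟩,
    ⟨⟨q.1.2.1, Finset.mem_filter.mpr ⟨Finset.mem_powerset.mpr q.2.2.2.1, q.2.2.2.2.1⟩⟩,
      ⟨q.1.2.2, q.2.2.2.2.2⟩⟩⟩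
  left_inv x := rfl
  right_inv q := rfl

noncomputable def e2 (n : ℕ) :
    {q : Multiset ℕ × Finset ℕ × ℕ // TCond n q} ≃
      {P : Multiset ℕ × Multiset ℕ // PCond n P} where
  toFun q := ⟨Fraw q.1, pcond_fraw q.2⟩
  invFun P := ⟨Graw P.1, tcond_graw P.2⟩
  left_inv q := Subtype.ext (graw_fraw q.2)
  right_inv P := Subtype.ext (fraw_graw P.2)

/-- `sptbar n` equals the number of pairs of partitions `(λ₁, λ₂)` (encoded as multisets of
positive integers) with `|λ₁| + |λ₂| = n`, `λ₁` nonempty, `s(λ₁) ≤ s(λ₂)` (vacuous if `λ₂`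
is empty, i.e. `s(∅) = ∞`), and every part of `λ₂` that is `≥ 2·s(λ₁)+1` odd.  Here
`s` is the smallest part, introduced below as the element `s ∈ λ₁` below all of `λ₁`. -/
theorem sptbar_eq_card_partition_pairs (n : ℕ) :
    sptbar n = Nat.card {P : Multiset ℕ × Multiset ℕ //
      (∀ a ∈ P.1, 0 < a) ∧ (∀ a ∈ P.2, 0 < a) ∧ P.1 ≠ 0 ∧
      P.1.sum + P.2.sum = n ∧
      ∃ s ∈ P.1, (∀ a ∈ P.1, s ≤ a) ∧ (∀ b ∈ P.2, s ≤ b) ∧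
        (∀ b ∈ P.2, 2 * s + 1 ≤ b → Odd b)} :=
  calc sptbar n
      = Fintype.card
        ((p : Nat.Partition n) × ({S // S ∈ fset n p} × Fin (numSmallest p.parts))) :=
        sptbar_eq_fintype_card n
    _ = Nat.card
        ((p : Nat.Partition n) × ({S // S ∈ fset n p} × Fin (numSmallest p.parts))) :=
        Nat.card_eq_fintype_card.symm
    _ = Nat.card {q : Multiset ℕ × Finset ℕ × ℕ // TCond n q} := Nat.card_congr (e1 n)
    _ = Nat.card {P : Multiset ℕ × Multiset ℕ // PCond n P} := Nat.card_congr (e2 n)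
end

section
/- For each n ≥ 1 there is a weight-preserving bijection Ψ_n from the set of partitions into distinct parts ≥ n+1 to the set of partitions into parts ≥ n+1 with all parts > 2n odd, given by sending each part m = b·2^j (b odd) to 2^{j−j₀} copies of b·2^{j₀}, where j₀ = j₀(m,n) is the smallest nonnegative integer with b·2^{j₀} ≥ n+1. -/
/-- The odd part of a positive integer `m = b(m)·2^{j(m)}` with `b(m)` odd. -/
def oddPart (m : ℕ) : ℕ := m / 2 ^ (m.factorization 2)

/-- `j0 n m` : the smallest nonnegative integer `j₀` with `b(m)·2^{j₀} ≥ n+1`. -/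
noncomputable def j0 (n m : ℕ) : ℕ := sInf {j : ℕ | n + 1 ≤ oddPart m * 2 ^ j}

/-- The image of the part `m = b·2^j` under Glaisher-type map:
`2^{j−j₀}` copies of `b·2^{j₀}`. -/
noncomputable def psiPart (n m : ℕ) : Multiset ℕ :=
  Multiset.replicate (2 ^ (m.factorization 2 - j0 n m)) (oddPart m * 2 ^ (j0 n m))

/-- The map `Ψ_n`, applied to a partition (multiset of parts) by replacing each part
independently. -/
noncomputable def Psi (n : ℕ) (M : Multiset ℕ) : Multiset ℕ := M.bind (psiPart n)

/-- `D_n` : partitions into distinct parts, all `≥ n+1`. -/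
def Dn (n : ℕ) : Set (Multiset ℕ) := {M | M.Nodup ∧ ∀ a ∈ M, n + 1 ≤ a}

/-- `P_n` : partitions into parts `≥ n+1` in which every part `> 2n` is odd. -/
def Pn (n : ℕ) : Set (Multiset ℕ) :=
  {M | (∀ a ∈ M, n + 1 ≤ a) ∧ ∀ a ∈ M, 2 * n < a → Odd a}





lemma oddPart_mul_pow (m : ℕ) : oddPart m * 2 ^ (m.factorization 2) = m := by
  rcases eq_or_ne m 0 with rfl | hm
  · simp [oddPart]
  · rw [oddPart, Nat.div_mul_cancel (Nat.ordProj_dvd m 2)]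

lemma odd_oddPart (m : ℕ) (hm : m ≠ 0) : Odd (oddPart m) := by
  have := Nat.not_dvd_ordCompl (p := 2) Nat.prime_two hm
  rw [Nat.odd_iff]
  exact Nat.two_dvd_ne_zero.mp this

lemma factorization_odd_mul_pow {b : ℕ} (hb : Odd b) (e : ℕ) :
    (b * 2 ^ e).factorization 2 = e := by
  have hb0 : b ≠ 0 := by rintro rfl; simp at hb
  rw [Nat.factorization_mul hb0 (by positivity), Nat.Prime.factorization_pow Nat.prime_two]
  simp [Nat.factorization_eq_zero_of_not_dvd (Nat.two_dvd_ne_zero.mpr (Nat.odd_iff.mp hb))]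

lemma oddPart_odd_mul_pow {b : ℕ} (hb : Odd b) (e : ℕ) : oddPart (b * 2 ^ e) = b := by
  rw [oddPart, factorization_odd_mul_pow hb, Nat.mul_div_cancel _ (by positivity)]

-- j0 facts, for m ≥ n+1
lemma j0_mem {n m : ℕ} (hm : n + 1 ≤ m) : n + 1 ≤ oddPart m * 2 ^ (j0 n m) := by
  have h0 : m ≠ 0 := by omega
  have : (m.factorization 2) ∈ {j : ℕ | n + 1 ≤ oddPart m * 2 ^ j} := by
    simp only [Set.mem_setOf_eq, oddPart_mul_pow]; exact hm
  exact Nat.sInf_mem ⟨_, this⟩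

lemma j0_le {n m j : ℕ} (h : n + 1 ≤ oddPart m * 2 ^ j) : j0 n m ≤ j :=
  Nat.sInf_le h

lemma j0_le_factorization {n m : ℕ} (hm : n + 1 ≤ m) : j0 n m ≤ m.factorization 2 :=
  j0_le (by rw [oddPart_mul_pow]; exact hm)

lemma j0_min {n m : ℕ} (hm : n + 1 ≤ m) (h1 : 1 ≤ j0 n m) :
    oddPart m * 2 ^ (j0 n m - 1) ≤ n := by
  by_contra h
  have := j0_le (n := n) (m := m) (j := j0 n m - 1) (by omega)
  omega









/-- the value of the produced part -/
noncomputable def cpart (n m : ℕ) : ℕ := oddPart m * 2 ^ (j0 n m)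

lemma psiPart_sum {n m : ℕ} (hm : n + 1 ≤ m) : (psiPart n m).sum = m := by
  rw [psiPart, Multiset.sum_replicate, smul_eq_mul, mul_comm (oddPart m), ← mul_assoc,
    ← pow_add]
  rw [Nat.sub_add_cancel (j0_le_factorization hm), mul_comm, oddPart_mul_pow]

/-- key: cpart is "good": ≥ n+1 and odd if > 2n -/
lemma cpart_ge {n m : ℕ} (hm : n + 1 ≤ m) : n + 1 ≤ cpart n m := j0_mem hm

lemma cpart_odd_of_gt {n m : ℕ} (hm : n + 1 ≤ m) (h : 2 * n < cpart n m) : Odd (cpart n m) := by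
  rcases Nat.eq_zero_or_pos (j0 n m) with h0 | h0
  · rw [cpart, h0, pow_zero, mul_one]; exact odd_oddPart m (by omega)
  · exfalso
    have := j0_min hm h0
    have h2 : cpart n m = oddPart m * 2 ^ (j0 n m - 1) * 2 := by
      rw [cpart, mul_assoc, ← pow_succ, Nat.sub_add_cancel h0]
    omega

/-- key lemma K : for c "good", j0 n c equals the 2-adic valuation of c -/
lemma j0_eq_factorization {n c : ℕ} (hc : n + 1 ≤ c) (hodd : 2 * n < c → Odd c) :
    j0 n c = c.factorization 2 := by
  refine le_antisymm (j0_le_factorization hc) ?_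
  by_contra h
  push_neg at h
  have h1 : 1 ≤ j0 n c → oddPart c * 2 ^ (j0 n c - 1) ≤ n := j0_min hc
  have hmem : n + 1 ≤ oddPart c * 2 ^ (j0 n c) := j0_mem hc
  -- c is even since factorization ≥ 1
  have hv : 1 ≤ c.factorization 2 := by omega
  have hc0 : c ≠ 0 := by omega
  have hce : 2 ∣ c := (Nat.Prime.dvd_iff_one_le_factorization Nat.prime_two hc0).mpr hv
  have hcle : c ≤ 2 * n := by
    by_contra hgt
    have := hodd (by omega)
    rw [Nat.odd_iff] at this
    omega
  have h2 : oddPart c * 2 ^ (c.factorization 2 - 1) * 2 = c := by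
    rw [mul_assoc, ← pow_succ, Nat.sub_add_cancel hv, oddPart_mul_pow]
  have hle : oddPart c * 2 ^ (j0 n c) ≤ oddPart c * 2 ^ (c.factorization 2 - 1) :=
    Nat.mul_le_mul_left _ (Nat.pow_le_pow_right (by norm_num) (by omega))
  omega

lemma cpart_eq_self {n c : ℕ} (hc : n + 1 ≤ c) (hodd : 2 * n < c → Odd c) :
    cpart n c = c := by
  rw [cpart, j0_eq_factorization hc hodd, oddPart_mul_pow]

lemma j0_congr {n m₁ m₂ : ℕ} (h : oddPart m₁ = oddPart m₂) : j0 n m₁ = j0 n m₂ := by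
  rw [j0, j0, h]

/-- decomposition of a part m ≥ n+1 -/
lemma cpart_mul_pow {n m : ℕ} (hm : n + 1 ≤ m) :
    cpart n m * 2 ^ (m.factorization 2 - j0 n m) = m := by
  rw [cpart, mul_assoc, ← pow_add, Nat.add_sub_cancel' (j0_le_factorization hm),
    oddPart_mul_pow]

lemma good_mul_pow {n c : ℕ} (hc : n + 1 ≤ c) (hodd : 2 * n < c → Odd c) (e : ℕ) :
    oddPart (c * 2 ^ e) = oddPart c ∧ (c * 2 ^ e).factorization 2 = c.factorization 2 + e := by
  have hc0 : c ≠ 0 := by omega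
  have hb : Odd (oddPart c) := odd_oddPart c hc0
  have hdecomp : c * 2 ^ e = oddPart c * 2 ^ (c.factorization 2 + e) := by
    rw [pow_add, ← mul_assoc, oddPart_mul_pow]
  rw [hdecomp, oddPart_odd_mul_pow hb, factorization_odd_mul_pow hb]
  exact ⟨rfl, rfl⟩

lemma psiPart_good {n c : ℕ} (hc : n + 1 ≤ c) (hodd : 2 * n < c → Odd c) (e : ℕ) :
    psiPart n (c * 2 ^ e) = Multiset.replicate (2 ^ e) c := by
  obtain ⟨h1, h2⟩ := good_mul_pow hc hodd e
  have hj : j0 n (c * 2 ^ e) = j0 n c := j0_congr h1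
  have hjc : j0 n c = c.factorization 2 := j0_eq_factorization hc hodd
  rw [psiPart, h1, h2, hj, hjc, Nat.add_sub_cancel_left, oddPart_mul_pow]

lemma cpart_good_mul_pow {n c : ℕ} (hc : n + 1 ≤ c) (hodd : 2 * n < c → Odd c) (e : ℕ) :
    cpart n (c * 2 ^ e) = c := by
  obtain ⟨h1, _⟩ := good_mul_pow hc hodd e
  rw [cpart, j0_congr h1, h1, ← cpart, cpart_eq_self hc hodd]

/-- sum preservation -/
lemma psi_sum {n : ℕ} (M : Multiset ℕ) (hM : ∀ a ∈ M, n + 1 ≤ a) :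
    (Psi n M).sum = M.sum := by
  rw [Psi, Multiset.sum_bind]
  rw [show M.map (fun m => (psiPart n m).sum) = M.map id from
    Multiset.map_congr rfl (fun m hm => psiPart_sum (hM m hm))]
  simp

/-- maps into Pn -/
lemma psi_mapsTo {n : ℕ} : Set.MapsTo (Psi n) (Dn n) (Pn n) := by
  rintro M ⟨-, hge⟩
  constructor
  · intro a ha
    rw [Psi, Multiset.mem_bind] at ha
    obtain ⟨m, hm, ha⟩ := ha
    have : a = cpart n m := Multiset.eq_of_mem_replicate (by rwa [psiPart] at ha)
    rw [this]; exact cpart_ge (hge m hm)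
  · intro a ha hgt
    rw [Psi, Multiset.mem_bind] at ha
    obtain ⟨m, hm, ha⟩ := ha
    have : a = cpart n m := Multiset.eq_of_mem_replicate (by rwa [psiPart] at ha)
    subst this
    exact cpart_odd_of_gt (hge m hm) hgt

/-- inverse map -/
noncomputable def Phi (n : ℕ) (N : Multiset ℕ) : Multiset ℕ :=
  N.dedup.bind (fun c => ((N.count c).bitIndices.map (fun e => c * 2 ^ e) : Multiset ℕ))

lemma phi_mem_dn {n : ℕ} {N : Multiset ℕ} (hN : N ∈ Pn n) : Phi n N ∈ Dn n := by
  obtain ⟨hge, hodd⟩ := hN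
  constructor
  · rw [Phi, Multiset.nodup_bind]
    constructor
    · intro c hc
      rw [Multiset.coe_nodup]
      refine List.Nodup.map ?_ (Nat.bitIndices_sorted).nodup
      intro e1 e2 h
      have hc' : n + 1 ≤ c := hge c (Multiset.mem_dedup.mp hc)
      exact Nat.pow_right_injective (le_refl 2) <|
        Nat.eq_of_mul_eq_mul_left (by omega) h
    · refine (Multiset.nodup_dedup N).pairwise ?_
      intro c1 hc1 c2 hc2 hne
      rw [Multiset.mem_dedup] at hc1 hc2
      have h1 : n + 1 ≤ c1 := hge c1 hc1
      have h2 : n + 1 ≤ c2 := hge c2 hc2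
      simp only [Function.onFun]
      rw [Multiset.disjoint_left]
      rintro a ha1 ha2
      rw [Multiset.mem_coe, List.mem_map] at ha1 ha2
      obtain ⟨e1, -, rfl⟩ := ha1
      obtain ⟨e2, -, he⟩ := ha2
      apply hne
      calc c1 = cpart n (c1 * 2 ^ e1) := (cpart_good_mul_pow h1 (hodd c1 hc1) e1).symm
        _ = cpart n (c2 * 2 ^ e2) := by rw [he]
        _ = c2 := cpart_good_mul_pow h2 (hodd c2 hc2) e2
  · intro a ha
    rw [Phi, Multiset.mem_bind] at ha
    obtain ⟨c, hc, ha⟩ := ha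
    rw [Multiset.mem_coe, List.mem_map] at ha
    obtain ⟨e, -, rfl⟩ := ha
    have hc' : n + 1 ≤ c := hge c (Multiset.mem_dedup.mp hc)
    have : c ≤ c * 2 ^ e := Nat.le_mul_of_pos_right c (by positivity)
    omega

lemma bind_psiPart_list {n c : ℕ} (hc : n + 1 ≤ c) (hodd : 2 * n < c → Odd c) (L : List ℕ) :
    ((L.map (fun e => c * 2 ^ e) : List ℕ) : Multiset ℕ).bind (psiPart n) =
      Multiset.replicate ((L.map (fun e => 2 ^ e)).sum) c := by
  induction L with
  | nil => simp
  | cons e L ih =>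
    simp only [List.map_cons, List.sum_cons, ← Multiset.cons_coe, Multiset.cons_bind, ih,
      psiPart_good hc hodd e]
    rw [← Multiset.replicate_add]

lemma psi_phi {n : ℕ} {N : Multiset ℕ} (hN : N ∈ Pn n) : Psi n (Phi n N) = N := by
  obtain ⟨hge, hodd⟩ := hN
  rw [Psi, Phi, Multiset.bind_assoc]
  have : ∀ c ∈ N.dedup,
      (((N.count c).bitIndices.map (fun e => c * 2 ^ e) : Multiset ℕ)).bind (psiPart n) =
        Multiset.replicate (N.count c) c := by
    intro c hc
    rw [Multiset.mem_dedup] at hc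
    rw [bind_psiPart_list (hge c hc) (hodd c hc)]
    congr 1
    exact Nat.twoPowSum_bitIndices (N.count c)
  calc N.dedup.bind (fun c => (((N.count c).bitIndices.map (fun e => c * 2 ^ e) : Multiset ℕ)).bind (psiPart n))
      = N.dedup.bind (fun c => Multiset.replicate (N.count c) c) := Multiset.bind_congr this
    _ = N := by
        rw [Multiset.bind, Multiset.join]
        rw [show (N.dedup.map (fun c => Multiset.replicate (N.count c) c)).sum
            = ∑ c ∈ N.toFinset, Multiset.replicate (N.count c) c from rfl]
        simp only [← Multiset.nsmul_singleton]
        exact Multiset.toFinset_sum_count_nsmul_eq N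

/-- sum of 2^e over a nodup multiset determines the multiset -/
lemma nodup_twoPowSum_inj {E1 E2 : Multiset ℕ} (h1 : E1.Nodup) (h2 : E2.Nodup)
    (h : (E1.map (fun e => 2 ^ e)).sum = (E2.map (fun e => 2 ^ e)).sum) : E1 = E2 := by
  set L1 := E1.sort (· ≤ ·) with hL1
  set L2 := E2.sort (· ≤ ·) with hL2
  have e1 : (L1 : Multiset ℕ) = E1 := Multiset.sort_eq _ _
  have e2 : (L2 : Multiset ℕ) = E2 := Multiset.sort_eq _ _
  have s1 : L1.Pairwise (· < ·) :=
    ((Multiset.pairwise_sort _ _).and (show L1.Nodup by rw [← Multiset.coe_nodup, e1]; exact h1)).imp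
      fun h => lt_of_le_of_ne h.1 h.2
  have s2 : L2.Pairwise (· < ·) :=
    ((Multiset.pairwise_sort _ _).and (show L2.Nodup by rw [← Multiset.coe_nodup, e2]; exact h2)).imp
      fun h => lt_of_le_of_ne h.1 h.2
  have hsum : (L1.map (fun i => 2 ^ i)).sum = (L2.map (fun i => 2 ^ i)).sum := by
    have : ∀ L : List ℕ, (L.map (fun i => 2 ^ i)).sum
        = (((L : Multiset ℕ)).map (fun e => 2 ^ e)).sum := by intro L; simp
    rw [this, this, e1, e2, h]
  have := Nat.bitIndices_twoPowsum s1.sortedLT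
  rw [hsum, Nat.bitIndices_twoPowsum s2.sortedLT] at this
  rw [← e1, ← e2, this]

/-- the multiset of exponents contributing to value c -/
noncomputable def expF (n : ℕ) (M : Multiset ℕ) (c : ℕ) : Multiset ℕ :=
  (M.filter (fun m => cpart n m = c)).map (fun m => m.factorization 2 - j0 n m)

lemma sum_map_ite {α : Type*} (p : α → Prop) [DecidablePred p] (f : α → ℕ) (M : Multiset α) :
    (M.map (fun m => if p m then f m else 0)).sum = ((M.filter p).map f).sum := by
  induction M using Multiset.induction with
  | empty => simp
  | cons a s ih =>
    by_cases h : p a <;>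
      simp [Multiset.filter_cons, h, ih]

lemma count_psi {n : ℕ} (M : Multiset ℕ) (c : ℕ) :
    (Psi n M).count c = ((expF n M c).map (fun e => 2 ^ e)).sum := by
  rw [Psi, Multiset.count_bind, expF, Multiset.map_map]
  have : ∀ m : ℕ, (psiPart n m).count c =
      if cpart n m = c then 2 ^ (m.factorization 2 - j0 n m) else 0 := by
    intro m
    rw [psiPart, Multiset.count_replicate, ← cpart]
  rw [show M.map (fun m => (psiPart n m).count c)
      = M.map (fun m => if cpart n m = c then 2 ^ (m.factorization 2 - j0 n m) else 0) from
    Multiset.map_congr rfl (fun m _ => this m)]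
  exact sum_map_ite _ _ M

lemma expF_nodup {n : ℕ} {M : Multiset ℕ} (hM : M ∈ Dn n) (c : ℕ) : (expF n M c).Nodup := by
  obtain ⟨hnd, hge⟩ := hM
  refine (hnd.filter _).map_on ?_
  intro m1 hm1 m2 hm2 h
  rw [Multiset.mem_filter] at hm1 hm2
  have d1 : cpart n m1 * 2 ^ (m1.factorization 2 - j0 n m1) = m1 :=
    cpart_mul_pow (hge m1 hm1.1)
  have d2 : cpart n m2 * 2 ^ (m2.factorization 2 - j0 n m2) = m2 :=
    cpart_mul_pow (hge m2 hm2.1)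
  rw [← d1, ← d2, hm1.2, hm2.2, h]

lemma mem_iff_expF {n : ℕ} {M : Multiset ℕ} (hM : M ∈ Dn n) {m : ℕ} (hm : n + 1 ≤ m) :
    m ∈ M ↔ (m.factorization 2 - j0 n m) ∈ expF n M (cpart n m) := by
  obtain ⟨-, hge⟩ := hM
  constructor
  · intro h
    exact Multiset.mem_map.mpr ⟨m, Multiset.mem_filter.mpr ⟨h, rfl⟩, rfl⟩
  · intro h
    obtain ⟨m', hm', he⟩ := Multiset.mem_map.mp h
    rw [Multiset.mem_filter] at hm'
    have d' : cpart n m' * 2 ^ (m'.factorization 2 - j0 n m') = m' :=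
      cpart_mul_pow (hge m' hm'.1)
    have d : cpart n m * 2 ^ (m.factorization 2 - j0 n m) = m := cpart_mul_pow hm
    have hmm : m' = m := by rw [← d', hm'.2, he, d]
    exact hmm ▸ hm'.1

lemma psi_injOn {n : ℕ} : Set.InjOn (Psi n) (Dn n) := by
  intro M1 h1 M2 h2 h
  have hE : ∀ c, expF n M1 c = expF n M2 c := by
    intro c
    refine nodup_twoPowSum_inj (expF_nodup h1 c) (expF_nodup h2 c) ?_
    rw [← count_psi, ← count_psi, h]
  rw [Multiset.Nodup.ext h1.1 h2.1]
  intro m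
  by_cases hm : n + 1 ≤ m
  · rw [mem_iff_expF h1 hm, mem_iff_expF h2 hm, hE]
  · constructor
    · intro hmem; exact absurd (h1.2 m hmem) hm
    · intro hmem; exact absurd (h2.2 m hmem) hm
/-- For every `n ≥ 1`, the explicit map `Ψ_n` is a weight-preserving bijection from `D_n`
onto `P_n`. -/
theorem psi_bijOn_weight_preserving (n : ℕ) (hn : 1 ≤ n) :
    Set.BijOn (Psi n) (Dn n) (Pn n) ∧ ∀ M ∈ Dn n, (Psi n M).sum = M.sum := by
  refine ⟨⟨psi_mapsTo, psi_injOn, ?_⟩, fun M hM => psi_sum M hM.2⟩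
  intro N hN
  exact ⟨Phi n N, phi_mem_dn hN, psi_phi hN⟩
end

section
/- With φ(q) = ∑_{k∈ℤ} q^{k^2}, the identity φ(−q)^2 = ∏(q^9;q^9)_∞^4/(q^{18};q^{18})_∞^2 − 4q·(q^{18};q^{18})_∞ (q^9;q^9)_∞ (q^3;q^3)_∞ / (q^6;q^6)_∞ + 4q^2·(q^{18};q^{18})_∞^4 (q^3;q^3)_∞^2 / ((q^9;q^9)_∞^2 (q^6;q^6)_∞^2) holds as formal power series; in particular this gives the 3-dissection of (q;q)_∞^2/(−q;q)_∞^2. -/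
open PowerSeries Finset

/-- The infinite sum `∑_{n≥0} f n` of power series, where the `n`-th term is assumed to have
order `> n`, defined coefficientwise by truncation. -/
noncomputable def psum (f : ℕ → PowerSeries ℚ) : PowerSeries ℚ :=
  PowerSeries.mk fun d => PowerSeries.coeff d (∑ j ∈ Finset.range (d + 1), f j)

/-- `φ(−q) = ∑_{k∈ℤ} (−q)^{k²} = 1 + 2∑_{k≥1} (−1)^k q^{k²}`. -/
noncomputable def phiNeg : PowerSeries ℚ :=
  1 + psum (fun k => ((2 : ℚ) * (-1) ^ (k + 1)) • (X : PowerSeries ℚ) ^ ((k + 1) ^ 2))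

/-- `(q^a;q^a)_∞ = ∏_{k≥1} (1 − q^{ak})`. -/
noncomputable def P (a : ℕ) : PowerSeries ℚ :=
  pprod (fun k => 1 - (X : PowerSeries ℚ) ^ (a * (k + 1)))

namespace TD

abbrev R := PowerSeries ℚ

/-- Equality of coefficients up to degree `d`. -/
def Eqd (d : ℕ) (f g : R) : Prop := ∀ i ≤ d, PowerSeries.coeff i f = PowerSeries.coeff i g

lemma Eqd.refl (d : ℕ) (f : R) : Eqd d f f := fun _ _ => rfl

lemma Eqd.symm {d : ℕ} {f g : R} (h : Eqd d f g) : Eqd d g f := fun i hi => (h i hi).symm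

lemma Eqd.trans {d : ℕ} {f g h : R} (h1 : Eqd d f g) (h2 : Eqd d g h) : Eqd d f h :=
  fun i hi => (h1 i hi).trans (h2 i hi)

lemma Eqd.mono {d d' : ℕ} {f g : R} (h : Eqd d f g) (hd : d' ≤ d) : Eqd d' f g :=
  fun i hi => h i (hi.trans hd)

lemma Eqd.of_eq {d : ℕ} {f g : R} (h : f = g) : Eqd d f g := h ▸ Eqd.refl d f

lemma Eqd.add {d : ℕ} {f g f' g' : R} (h1 : Eqd d f f') (h2 : Eqd d g g') :
    Eqd d (f + g) (f' + g') := by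
  intro i hi; simp [map_add, h1 i hi, h2 i hi]

lemma Eqd.neg {d : ℕ} {f f' : R} (h1 : Eqd d f f') : Eqd d (-f) (-f') := by
  intro i hi; simp [h1 i hi]

lemma Eqd.sub {d : ℕ} {f g f' g' : R} (h1 : Eqd d f f') (h2 : Eqd d g g') :
    Eqd d (f - g) (f' - g') := by
  intro i hi; simp [map_sub, h1 i hi, h2 i hi]

lemma Eqd.mul {d : ℕ} {f g f' g' : R} (h1 : Eqd d f f') (h2 : Eqd d g g') :
    Eqd d (f * g) (f' * g') := by
  intro i hi
  rw [PowerSeries.coeff_mul, PowerSeries.coeff_mul]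
  apply Finset.sum_congr rfl
  rintro ⟨a, b⟩ hab
  rw [Finset.HasAntidiagonal.mem_antidiagonal] at hab
  have ha : a ≤ d := le_trans (hab ▸ Nat.le_add_right a b) hi
  have hb : b ≤ d := le_trans (hab ▸ Nat.le_add_left b a) hi
  rw [h1 a ha, h2 b hb]

lemma Eqd.pow {d : ℕ} {f f' : R} (h1 : Eqd d f f') (n : ℕ) : Eqd d (f ^ n) (f' ^ n) := by
  induction n with
  | zero => simpa using Eqd.refl d 1
  | succ n ih => rw [pow_succ, pow_succ]; exact ih.mul h1

lemma Eqd.sum {d : ℕ} {ι : Type*} (S : Finset ι) (f g : ι → R)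
    (h : ∀ i ∈ S, Eqd d (f i) (g i)) : Eqd d (∑ i ∈ S, f i) (∑ i ∈ S, g i) := by
  intro i hi
  rw [map_sum, map_sum]
  exact Finset.sum_congr rfl fun j hj => h j hj i hi

lemma Eqd.prod {d : ℕ} {ι : Type*} (S : Finset ι) (f g : ι → R)
    (h : ∀ i ∈ S, Eqd d (f i) (g i)) : Eqd d (∏ i ∈ S, f i) (∏ i ∈ S, g i) := by
  classical
  induction S using Finset.cons_induction with
  | empty => exact Eqd.refl d 1
  | cons a s ha ih =>
    rw [Finset.prod_cons, Finset.prod_cons]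
    exact Eqd.mul (h a (Finset.mem_cons_self a s)) (ih fun j hj => h j (Finset.mem_cons_of_mem hj))

lemma Eqd.prod_one {d : ℕ} {ι : Type*} (S : Finset ι) (f : ι → R)
    (h : ∀ i ∈ S, Eqd d (f i) 1) : Eqd d (∏ i ∈ S, f i) 1 := by
  have := Eqd.prod S f (fun _ => 1) h
  simpa using this

lemma eqd_ext {f g : R} (h : ∀ d, Eqd d f g) : f = g :=
  PowerSeries.ext fun n => h n n le_rfl

lemma eqd_X_pow_one_sub {d n : ℕ} (h : d < n) : Eqd d (1 - X ^ n : R) 1 := by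
  intro i hi
  rw [map_sub, PowerSeries.coeff_X_pow]
  have : i ≠ n := by omega
  simp [this]

lemma eqd_X_pow_zero {d n : ℕ} (h : d < n) : Eqd d (X ^ n : R) 0 := by
  intro i hi
  rw [PowerSeries.coeff_X_pow]
  have : i ≠ n := by omega
  simp [this]

lemma eqd_mul_X_pow_zero {d n : ℕ} (h : d < n) (u : R) : Eqd d (u * X ^ n) 0 := by
  intro i hi
  rw [PowerSeries.coeff_mul]
  rw [map_zero]
  apply Finset.sum_eq_zero
  rintro ⟨a, b⟩ hab
  rw [Finset.HasAntidiagonal.mem_antidiagonal] at hab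
  have : b ≠ n := by omega
  rw [PowerSeries.coeff_X_pow, if_neg this, mul_zero]

lemma Eqd.mul_X_pow {d : ℕ} {f g : R} (h : Eqd d f g) (n : ℕ) :
    Eqd (d + n) (f * X ^ n) (g * X ^ n) := by
  intro i hi
  rw [PowerSeries.coeff_mul, PowerSeries.coeff_mul]
  apply Finset.sum_congr rfl
  rintro ⟨a, b⟩ hab
  rw [Finset.HasAntidiagonal.mem_antidiagonal] at hab
  rw [PowerSeries.coeff_X_pow]
  by_cases hb : b = n
  · have ha : a ≤ d := by omega
    rw [h a ha]
  · simp [hb]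

-- truncation lemmas
lemma coeff_pprod (f : ℕ → R) (d : ℕ) :
    PowerSeries.coeff d (pprod f) = PowerSeries.coeff d (∏ j ∈ range (d + 1), f j) := by
  simp [pprod]

lemma coeff_psum (f : ℕ → R) (d : ℕ) :
    PowerSeries.coeff d (psum f) = PowerSeries.coeff d (∑ j ∈ range (d + 1), f j) := by
  simp [psum]

lemma eqd_pprod {f : ℕ → R} (hf : ∀ j, Eqd j (f j) 1) {d n : ℕ} (h : d < n) :
    Eqd d (pprod f) (∏ j ∈ range n, f j) := by
  intro i hi
  rw [coeff_pprod]
  have hsub : range (i + 1) ⊆ range n := by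
    apply Finset.range_subset_range.2; omega
  have hsplit : ∏ j ∈ range n, f j = (∏ j ∈ range n \ range (i+1), f j) * ∏ j ∈ range (i+1), f j :=
    (Finset.prod_sdiff hsub).symm
  rw [hsplit]
  have h1 : Eqd i (∏ j ∈ range n \ range (i+1), f j) 1 := by
    apply Eqd.prod_one
    intro j hj
    rw [Finset.mem_sdiff, Finset.mem_range, Finset.mem_range] at hj
    exact (hf j).mono (by omega)
  have := (h1.mul (Eqd.refl i (∏ j ∈ range (i+1), f j))) i le_rfl
  rw [this, one_mul]

lemma eqd_psum {f : ℕ → R} (hf : ∀ j, Eqd j (f j) 0) {d n : ℕ} (h : d < n) :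
    Eqd d (psum f) (∑ j ∈ range n, f j) := by
  intro i hi
  rw [coeff_psum]
  have hsub : range (i + 1) ⊆ range n := by
    apply Finset.range_subset_range.2; omega
  rw [← Finset.sum_sdiff hsub, map_add]
  have h1 : PowerSeries.coeff i (∑ j ∈ range n \ range (i+1), f j) = 0 := by
    rw [map_sum]
    apply Finset.sum_eq_zero
    intro j hj
    rw [Finset.mem_sdiff, Finset.mem_range, Finset.mem_range] at hj
    have := (hf j) i (by omega)
    simpa using this
  rw [h1, zero_add]

lemma eqd_sum_subset {d : ℕ} {ι : Type*} {S T : Finset ι} (hST : S ⊆ T) (f : ι → R)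
    (h : ∀ i ∈ T, i ∉ S → Eqd d (f i) 0) : Eqd d (∑ i ∈ T, f i) (∑ i ∈ S, f i) := by
  intro i hi
  rw [map_sum, map_sum, ← Finset.sum_subset hST]
  intro j hj hjs
  have := h j hj hjs i hi
  simpa using this





/-- triangular number of an integer: `k(k+1)/2 ≥ 0`. -/
def Tt (k : ℤ) : ℕ := (k * (k + 1) / 2).toNat

lemma Tt_cast (k : ℤ) : 2 * (Tt k : ℤ) = k * (k + 1) := by
  have he : 2 ∣ k * (k + 1) := (Int.even_mul_succ_self k).two_dvd
  have hn : 0 ≤ k * (k + 1) := by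
    rcases le_or_gt 0 k with h | h
    · exact mul_nonneg h (by omega)
    · have : k + 1 ≤ 0 := by omega
      exact mul_nonneg_of_nonpos_of_nonpos (le_of_lt h) this
  rw [Tt, Int.toNat_of_nonneg (by positivity)]
  exact Int.mul_ediv_cancel' he

lemma Tt_succ (k : ℤ) : (Tt (k + 1) : ℤ) = Tt k + (k + 1) := by
  have h1 := Tt_cast (k + 1)
  have h2 := Tt_cast k
  have h3 : 2 * (Tt (k+1) : ℤ) = 2 * (Tt k : ℤ) + 2 * (k + 1) := by linear_combination h1 - h2
  linarith

/-- the exponent `α k(k+1)/2 + β k(k−1)/2` of the theta series. -/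
def eE (α β : ℕ) (k : ℤ) : ℕ := α * Tt k + β * Tt (-k)

lemma eE_cast (α β : ℕ) (k : ℤ) :
    2 * (eE α β k : ℤ) = α * (k * (k + 1)) + β * (k * (k - 1)) := by
  have h1 := Tt_cast k
  have h2 := Tt_cast (-k)
  rw [eE]
  push_cast
  linear_combination (α : ℤ) * h1 + (β : ℤ) * h2

lemma eE_zero (α β : ℕ) : eE α β 0 = 0 := by
  have := eE_cast α β 0
  omega

lemma eE_neg (α β : ℕ) (k : ℤ) : eE α β (-k) = eE β α k := by
  simp [eE, neg_neg]; ring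

-- shift identities (for FJ)
lemma eE_shift_up (α β : ℕ) (k : ℤ) (m : ℕ) (hk : k ≤ (m : ℤ)) :
    α + (α + β) * m + eE α β k = eE α β (k + 1) + (α + β) * ((m : ℤ) - k).toNat := by
  have h1 := eE_cast α β k
  have h2 := eE_cast α β (k + 1)
  have ht : (((m : ℤ) - k).toNat : ℤ) = (m : ℤ) - k := Int.toNat_of_nonneg (by omega)
  have key : 2*((α : ℤ) + (α + β) * m + eE α β k) = 2*((eE α β (k+1) : ℤ) + (α + β) * (((m:ℤ) - k).toNat)) := by
    rw [ht]
    linear_combination h1 - h2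
  zify
  linarith

lemma eE_shift_down (α β : ℕ) (k : ℤ) (m : ℕ) (hk : -(m : ℤ) ≤ k) :
    β + (α + β) * m + eE α β k = eE α β (k - 1) + (α + β) * ((m : ℤ) + k).toNat := by
  have h1 := eE_cast α β k
  have h2 := eE_cast α β (k - 1)
  have ht : (((m : ℤ) + k).toNat : ℤ) = (m : ℤ) + k := Int.toNat_of_nonneg (by omega)
  have key : 2*((β : ℤ) + (α + β) * m + eE α β k) = 2*((eE α β (k-1) : ℤ) + (α + β) * (((m:ℤ) + k).toNat)) := by
    rw [ht]
    linear_combination h1 - h2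
  zify
  linarith

lemma eE_ge_sq (α β : ℕ) (hα : 1 ≤ α) (hβ : 1 ≤ β) (k : ℤ) :
    (k.natAbs : ℤ) ^ 2 ≤ (eE α β k : ℤ) := by
  have h1 := eE_cast α β k
  have ha : ((k.natAbs : ℤ))^2 = k * k := by
    rw [Int.natAbs_sq k]; ring
  rw [ha]
  nlinarith [mul_self_nonneg k, Tt_cast k, Tt_cast (-k),
    mul_nonneg (mul_self_nonneg k) (sub_nonneg.2 (by exact_mod_cast hα : (1:ℤ) ≤ α))]

/-- sign `(−1)^k` as a power series -/
noncomputable def sgp (k : ℤ) : R := if Even k then 1 else -1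

lemma sgp_add_one (k : ℤ) : sgp (k + 1) = - sgp k := by
  rcases Int.even_or_odd k with h | h
  · simp [sgp, h, Int.even_add_one, Int.not_even_iff_odd]
  · have : ¬ Even k := by simpa [Int.not_even_iff_odd] using h
    simp [sgp, this, Int.even_add_one]

lemma sgp_sub_one (k : ℤ) : sgp (k - 1) = - sgp k := by
  have := sgp_add_one (k - 1)
  simp at this
  rw [← neg_neg (sgp (k-1)), ← this]

lemma sgp_neg (k : ℤ) : sgp (-k) = sgp k := by simp [sgp]





/-- Gaussian-binomial-like coefficients, in the variable `Q = X^s`. -/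
noncomputable def gg (s : ℕ) : ℕ → ℤ → R
  | 0 => fun k => if k = 0 then 1 else 0
  | (m+1) => fun k =>
      (1 + X ^ (s * (2 * m + 1))) * gg s m k
        + X ^ (s * ((m + 1 : ℤ) - k).toNat) * gg s m (k - 1)
        + X ^ (s * ((m + 1 : ℤ) + k).toNat) * gg s m (k + 1)

lemma gg_zero_eq (s : ℕ) (k : ℤ) : gg s 0 k = if k = 0 then 1 else 0 := rfl

lemma gg_succ (s m : ℕ) (k : ℤ) : gg s (m+1) k =
      (1 + X ^ (s * (2 * m + 1))) * gg s m k
        + X ^ (s * ((m + 1 : ℤ) - k).toNat) * gg s m (k - 1)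
        + X ^ (s * ((m + 1 : ℤ) + k).toNat) * gg s m (k + 1) := rfl

lemma gg_vanish (s : ℕ) : ∀ m : ℕ, ∀ k : ℤ, m < k.natAbs → gg s m k = 0 := by
  intro m
  induction m with
  | zero => intro k hk; rw [gg_zero_eq, if_neg]; omega
  | succ m ih =>
    intro k hk
    rw [gg_succ, ih k (by omega), ih (k-1) (by omega), ih (k+1) (by omega)]
    ring

lemma gg_symm (s : ℕ) : ∀ m : ℕ, ∀ k : ℤ, gg s m (-k) = gg s m k := by
  intro m
  induction m with
  | zero => intro k; rw [gg_zero_eq, gg_zero_eq]; simp [neg_eq_zero]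
  | succ m ih =>
    intro k
    rw [gg_succ, gg_succ]
    have h1 : -k - 1 = -(k+1) := by ring
    have h2 : -k + 1 = -(k-1) := by ring
    rw [h1, h2, ih, ih, ih]
    have e1 : ((m:ℤ) + 1 - -k) = ((m:ℤ) + 1 + k) := by ring
    have e2 : ((m:ℤ) + 1 + -k) = ((m:ℤ) + 1 - k) := by ring
    rw [e1, e2]
    ring

lemma gg_diag (s : ℕ) : ∀ m : ℕ, gg s m m = 1 := by
  intro m
  induction m with
  | zero => simp [gg_zero_eq]
  | succ m ih =>
    rw [gg_succ]
    push_cast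
    rw [gg_vanish s m ((m:ℤ)+1) (by omega),
        gg_vanish s m ((m:ℤ)+1+1) (by omega)]
    have e1 : ((m:ℤ) + 1 - ((m:ℤ)+1)) = 0 := by ring
    have e2 : ((m:ℤ)+1) - 1 = (m:ℤ) := by ring
    rw [e1, e2, ih]
    simp

/-- `(Q;Q)_n` where `Q = X^s`. -/
noncomputable def QQf (s n : ℕ) : R := ∏ i ∈ Ioc 0 n, (1 - X ^ (s * i))

lemma QQf_zero (s : ℕ) : QQf s 0 = 1 := by simp [QQf]

lemma QQf_succ (s n : ℕ) : QQf s (n + 1) = QQf s n * (1 - X ^ (s * (n+1))) := by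
  rw [QQf, QQf, ← Finset.prod_Ioc_succ_top (Nat.zero_le _)]





lemma one_sub_X_pow_ne_zero {n : ℕ} (hn : 1 ≤ n) : (1 - X ^ n : R) ≠ 0 := by
  intro h
  have h0 := congrArg (PowerSeries.coeff 0) h
  rw [map_sub, PowerSeries.coeff_X_pow, if_neg (by omega : ¬ (0 = n))] at h0
  simp at h0

lemma Ioc_singleton (n : ℕ) : Ioc n (n+1) = {n+1} := by
  ext x; rw [Finset.mem_Ioc, Finset.mem_singleton]; omega

lemma prod_Ioc_split_bot {f : ℕ → R} {a b : ℕ} (h : a < b) :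
    ∏ i ∈ Ioc a b, f i = f (a+1) * ∏ i ∈ Ioc (a+1) b, f i := by
  rw [← Finset.prod_Ioc_consecutive f (by omega : a ≤ a+1) (by omega : a+1 ≤ b),
    Ioc_singleton, Finset.prod_singleton]

lemma star (s : ℕ) (hs : 1 ≤ s) : ∀ m : ℕ, ∀ k : ℕ, k ≤ m →
    QQf s (m - k) * gg s m (k : ℤ) = ∏ i ∈ Ioc (m + k) (2*m), (1 - X ^ (s * i)) := by
  intro m
  induction m with
  | zero =>
    intro k hk
    interval_cases k
    simp [QQf_zero, gg_zero_eq]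
  | succ m ih =>
    intro k hk
    rcases Nat.lt_or_ge k (m+1) with hk1 | hk1
    swap
    · -- k = m+1
      have hkm : k = m + 1 := by omega
      subst hkm
      have h0 : m + 1 - (m+1) = 0 := by omega
      rw [h0, QQf_zero, one_mul, gg_diag]
      have he : Ioc (m + 1 + (m+1)) (2*(m+1)) = ∅ := by
        apply Finset.Ioc_eq_empty; omega
      rw [he, Finset.prod_empty]
    rcases Nat.lt_or_ge k m with hk2 | hk2
    swap
    · -- k = m
      have hkm : m = k := by omega
      subst hkm
      have h1 : m + 1 - m = 1 := by omega
      rw [h1]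
      have e1 : (((m:ℕ)+1 : ℤ) - (m:ℕ)).toNat = 1 := by omega
      have e2 : (((m:ℕ)+1 : ℤ) + (m:ℕ)).toNat = 2*m+1 := by omega
      have hgs : gg s (m+1) (m:ℤ) =
          (1 + X ^ (s * (2 * m + 1))) * gg s m (m:ℤ)
            + X ^ (s * 1) * gg s m ((m:ℤ) - 1)
            + X ^ (s * (2*m+1)) * gg s m ((m:ℤ) + 1) := by
        rw [gg_succ, e1, e2]
      rw [hgs, gg_diag, gg_vanish s m ((m:ℤ)+1) (by omega), mul_zero, add_zero, mul_one]
      have hIoc : Ioc (m + 1 + m) (2*(m+1)) = {2*m+2} := by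
        ext x; simp; omega
      rw [hIoc, Finset.prod_singleton]
      have hq1 : QQf s 1 = 1 - X ^ (s*1) := by
        rw [QQf, Ioc_singleton 0, Finset.prod_singleton]
      rcases Nat.eq_zero_or_pos m with hm0 | hm0
      · subst hm0
        have hv : gg s 0 (((0:ℕ):ℤ) - 1) = 0 := gg_vanish s 0 _ (by omega)
        rw [hv, hq1]
        ring
      · -- m ≥ 1
        have ihm := ih (m-1) (by omega)
        have hcast : ((m - 1 : ℕ) : ℤ) = (m : ℤ) - 1 := by omega
        rw [hcast] at ihm
        have h2 : m - (m - 1) = 1 := by omega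
        rw [h2] at ihm
        have hIoc2 : Ioc (m + (m-1)) (2*m) = {2*m} := by ext x; simp; omega
        rw [hIoc2, Finset.prod_singleton] at ihm
        have key : QQf s 1 * (1 + X ^ (s * (2 * m + 1)) + X ^ (s * 1) * gg s m ((m:ℤ) - 1))
            = (1 + X ^ (s * (2*m+1))) * (QQf s 1) + X ^ (s*1) * (QQf s 1 * gg s m ((m:ℤ)-1)) := by
          ring
        rw [key, ihm, hq1]
        ring
    · -- main case k ≤ m - 1
      have hmk : 1 ≤ m := by omega
      have e1 : (((m:ℕ)+1 : ℤ) - (k:ℕ)).toNat = m + 1 - k := by omega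
      have e2 : (((m:ℕ)+1 : ℤ) + (k:ℕ)).toNat = m + 1 + k := by omega
      have hgs : gg s (m+1) (k:ℤ) =
          (1 + X ^ (s * (2 * m + 1))) * gg s m (k:ℤ)
            + X ^ (s * (m + 1 - k)) * gg s m ((k:ℤ) - 1)
            + X ^ (s * (m + 1 + k)) * gg s m ((k:ℤ) + 1) := by
        rw [gg_succ, e1, e2]
      have hu : (1 - X ^ (s * (m + 1 - k)) : R) ≠ 0 := by
        apply one_sub_X_pow_ne_zero
        have h1 : 1 ≤ m + 1 - k := by omega
        calc 1 = 1*1 := by ring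
          _ ≤ s * (m+1-k) := Nat.mul_le_mul hs h1
      apply mul_left_cancel₀ hu
      rw [hgs]
      have hQQ : QQf s (m + 1 - k) = QQf s (m - k) * (1 - X ^ (s * (m + 1 - k))) := by
        have h2 : m + 1 - k = (m - k) + 1 := by omega
        rw [h2, QQf_succ, ← h2]
      have hQQ3 : QQf s (m - k) = QQf s (m - k - 1) * (1 - X ^ (s * (m - k))) := by
        have h2 : m - k = (m - k - 1) + 1 := by omega
        rw [h2, QQf_succ, ← h2]
      have ihk := ih k (by omega)
      have ihk1 := ih (k+1) (by omega)
      have hcast1 : ((k + 1 : ℕ) : ℤ) = (k : ℤ) + 1 := by push_cast; ring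
      rw [hcast1, show m - (k+1) = m - k - 1 by omega, show m + (k+1) = m + 1 + k by omega] at ihk1
      -- sub-lemma
      have hSL : QQf s (m + 1 - k) * gg s m ((k:ℤ) - 1)
          = (1 - X ^ (s * (m + k))) * ∏ i ∈ Ioc (m + k) (2*m), (1 - X ^ (s * i)) := by
        rcases Nat.eq_zero_or_pos k with hk0 | hk0
        · subst hk0
          have hsym : gg s m ((0:ℕ) - 1 : ℤ) = gg s m ((1:ℕ) : ℤ) := by
            rw [show (((0:ℕ):ℤ) - 1 : ℤ) = -(((1:ℕ):ℤ)) by norm_num]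
            exact gg_symm s m _
          rw [hsym]
          have ih1 := ih 1 (by omega)
          have hQQ2 : QQf s (m + 1 - 0) = QQf s (m - 1) * (1 - X ^ (s * (m - 1 + 1))) * (1 - X ^ (s * (m - 1 + 1 + 1))) := by
            have h2 : m + 1 - 0 = (m - 1) + 1 + 1 := by omega
            rw [h2, QQf_succ, QQf_succ]
          rw [show m - 1 + 1 = m by omega] at hQQ2
          rw [hQQ2]
          have hbot : ∏ i ∈ Ioc (m + 0) (2*m), ((1:R) - X ^ (s*i))
              = ((1:R) - X ^ (s * (m + 0 + 1))) * ∏ i ∈ Ioc (m + 0 + 1) (2*m), ((1:R) - X ^ (s*i)) :=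
            prod_Ioc_split_bot (by omega)
          rw [hbot, show m + 0 + 1 = m + 1 by omega, ← ih1]
          ring
        · -- k ≥ 1
          have ihkm := ih (k-1) (by omega)
          have hcast2 : ((k - 1 : ℕ) : ℤ) = (k : ℤ) - 1 := by omega
          rw [hcast2, show m - (k-1) = m + 1 - k by omega, show m + (k-1) = m + k - 1 by omega] at ihkm
          rw [ihkm, prod_Ioc_split_bot (show m + k - 1 < 2*m by omega),
            show m + k - 1 + 1 = m + k by omega]
      -- split Rbig
      have hR1 : ∏ i ∈ Ioc (m + k) (2*m), ((1:R) - X ^ (s * i))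
          = ((1:R) - X ^ (s * (m + k + 1))) * ∏ i ∈ Ioc (m + k + 1) (2*m), ((1:R) - X ^ (s*i)) :=
        prod_Ioc_split_bot (by omega)
      rw [show m + 1 + k = m + k + 1 by omega] at ihk1 hgs ⊢
      have hRHS : ∏ i ∈ Ioc (m + k + 1) (2*(m+1)), ((1:R) - X ^ (s*i))
          = (∏ i ∈ Ioc (m + k + 1) (2*m), ((1:R) - X ^ (s*i))) * ((1:R) - X ^ (s * (2*m+1))) * ((1:R) - X ^ (s * (2*m+1+1))) := by
        rw [show 2*(m+1) = 2*m+1+1 by omega, Finset.prod_Ioc_succ_top (by omega),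
          Finset.prod_Ioc_succ_top (by omega)]
      rw [hRHS]
      -- step 1: substitute QQf splittings via linear_combination
      have step1 : (1 - X ^ (s * (m + 1 - k))) * (QQf s (m+1-k) *
              ((1 + X ^ (s * (2 * m + 1))) * gg s m (k:ℤ)
                + X ^ (s * (m + 1 - k)) * gg s m ((k:ℤ) - 1)
                + X ^ (s * (m + k + 1)) * gg s m ((k:ℤ) + 1)))
          = (1 - X ^ (s * (m+1-k))) * (1 - X ^ (s * (m+1-k))) * (1 + X ^ (s * (2*m+1))) * (QQf s (m-k) * gg s m (k:ℤ))
            + (1 - X ^ (s * (m+1-k))) * X ^ (s * (m+1-k)) * (QQf s (m+1-k) * gg s m ((k:ℤ)-1))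
            + (1 - X ^ (s * (m+1-k))) * (1 - X ^ (s * (m+1-k))) * X ^ (s * (m+k+1)) * (1 - X ^ (s * (m-k))) * (QQf s (m-k-1) * gg s m ((k:ℤ)+1)) := by
        linear_combination
          ((1 - X ^ (s * (m+1-k))) * ((1 + X ^ (s * (2*m+1))) * gg s m (k:ℤ)
              + X ^ (s * (m + k + 1)) * gg s m ((k:ℤ) + 1))) * hQQ
          + ((1 - X ^ (s * (m+1-k))) * (1 - X ^ (s * (m+1-k))) * X ^ (s * (m+k+1)) * gg s m ((k:ℤ)+1)) * hQQ3
      rw [step1, ihk, hSL, ihk1, hR1]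
      -- final polynomial identity in powers of X
      have pA : (X:R) ^ (s * (m + 1 - k)) = X ^ (s * (m - k)) * X ^ s := by
        rw [← pow_add]; congr 1
        rw [show m + 1 - k = (m - k) + 1 by omega]; ring
      have pD : (X:R) ^ (s * (m + k)) = X ^ (s * (m - k)) * (X ^ (s * k))^2 := by
        rw [← pow_mul, ← pow_add]; congr 1
        rw [show m + k = (m - k) + 2*k by omega]; ring
      have pB : (X:R) ^ (s * (m + k + 1)) = X ^ (s * (m - k)) * (X ^ (s * k))^2 * X ^ s := by
        rw [← pow_mul, ← pow_add, ← pow_add]; congr 1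
        rw [show m + k + 1 = (m - k) + 2*k + 1 by omega]; ring
      have pE : (X:R) ^ (s * (2 * m + 1)) = (X ^ (s * (m - k)))^2 * (X ^ (s * k))^2 * X ^ s := by
        rw [← pow_mul, ← pow_mul, ← pow_add, ← pow_add]; congr 1
        rw [show 2*m + 1 = (m-k)*2 + 2*k + 1 by omega]; ring
      have pF : (X:R) ^ (s * (2 * m + 1 + 1)) = (X ^ (s * (m - k)))^2 * (X ^ (s * k))^2 * X ^ s * X ^ s := by
        rw [← pow_mul, ← pow_mul, ← pow_add, ← pow_add, ← pow_add]; congr 1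
        rw [show 2*m + 1 + 1 = (m-k)*2 + 2*k + 1 + 1 by omega]; ring
      rw [pA, pD, pB, pE, pF]
      ring


end TD
section FJtest
namespace TD
open Finset PowerSeries

lemma icc_zero : Icc (-(0:ℤ)) (0:ℤ) = {0} := by
  ext x; rw [Finset.mem_Icc, Finset.mem_singleton]; omega

lemma FJ (α β : ℕ) (m : ℕ) :
    ∏ j ∈ range m, ((1 - (X:R) ^ (α + (α+β)*j)) * (1 - (X:R) ^ (β + (α+β)*j)))
      = ∑ k ∈ Icc (-(m:ℤ)) (m:ℤ), sgp k * (gg (α+β) m k * (X:R) ^ (eE α β k)) := by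
  induction m with
  | zero =>
    rw [Finset.prod_range_zero]
    rw [show ((0:ℕ):ℤ) = (0:ℤ) by norm_num, icc_zero, Finset.sum_singleton]
    rw [eE_zero, gg_zero_eq]
    simp [sgp]
  | succ m ih =>
    rw [Finset.prod_range_succ, ih]
    have hc : ((m+1:ℕ):ℤ) = (m:ℤ)+1 := by push_cast; ring
    rw [hc]
    have hAB : ((1:R) - X ^ (α + (α+β)*m)) * (1 - X ^ (β + (α+β)*m))
        = 1 + X ^ ((α+β) * (2*m+1)) - X ^ (α + (α+β)*m) - X ^ (β + (α+β)*m) := by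
      have h : (X:R) ^ (α + (α+β)*m) * X ^ (β + (α+β)*m) = X ^ ((α+β)*(2*m+1)) := by
        rw [← pow_add]; congr 1; ring
      linear_combination h
    rw [hAB, mul_sub, mul_sub, mul_add, mul_one]
    -- piece 1 : S + S*E
    have h1 : (∑ k ∈ Icc (-(m:ℤ)) (m:ℤ), sgp k * (gg (α+β) m k * (X:R) ^ (eE α β k)))
          + (∑ k ∈ Icc (-(m:ℤ)) (m:ℤ), sgp k * (gg (α+β) m k * (X:R) ^ (eE α β k))) * X ^ ((α+β) * (2*m+1))
        = ∑ k ∈ Icc (-(m:ℤ)-1) ((m:ℤ)+1),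
            sgp k * (((1 + X ^ ((α+β) * (2*m+1))) * gg (α+β) m k) * (X:R) ^ (eE α β k)) := by
      rw [Finset.sum_mul, ← Finset.sum_add_distrib]
      rw [Finset.sum_subset (show Icc (-(m:ℤ)) (m:ℤ) ⊆ Icc (-(m:ℤ)-1) ((m:ℤ)+1) by
        apply Finset.Icc_subset_Icc <;> omega)]
      · apply Finset.sum_congr rfl
        intro k hk
        ring
      · intro k hk hk2
        rw [Finset.mem_Icc] at hk hk2
        rw [gg_vanish (α+β) m k (by omega)]
        ring
    -- piece A
    have hA : (∑ k ∈ Icc (-(m:ℤ)) (m:ℤ), sgp k * (gg (α+β) m k * (X:R) ^ (eE α β k))) * X ^ (α + (α+β)*m)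
        = ∑ k ∈ Icc (-(m:ℤ)-1) ((m:ℤ)+1),
            (- sgp k) * ((X ^ ((α+β) * (((m:ℤ)+1) - k).toNat) * gg (α+β) m (k-1)) * (X:R) ^ (eE α β k)) := by
      rw [Finset.sum_mul]
      have e1 : ∀ k ∈ Icc (-(m:ℤ)) (m:ℤ),
          sgp k * (gg (α+β) m k * (X:R) ^ (eE α β k)) * X ^ (α + (α+β)*m)
          = (fun k => (- sgp k) * ((X ^ ((α+β) * (((m:ℤ)+1) - k).toNat) * gg (α+β) m (k-1)) * (X:R) ^ (eE α β k))) (k+1) := by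
        intro k hk
        rw [Finset.mem_Icc] at hk
        simp only
        rw [sgp_add_one, add_sub_cancel_right, neg_neg]
        have he : (X:R) ^ (eE α β k) * X ^ (α + (α+β)*m)
            = X ^ ((α+β) * (((m:ℤ)+1) - (k+1)).toNat) * (X:R) ^ (eE α β (k+1)) := by
          rw [← pow_add, ← pow_add]
          rw [show ((m:ℤ)+1) - (k+1) = (m:ℤ) - k by ring]
          rw [show eE α β k + (α + (α+β)*m) = α + (α+β)*m + eE α β k by ring]
          rw [eE_shift_up α β k m hk.2]
          ring
        calc sgp k * (gg (α+β) m k * (X:R) ^ (eE α β k)) * X ^ (α + (α+β)*m)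
            = sgp k * (gg (α+β) m k * ((X:R) ^ (eE α β k) * X ^ (α + (α+β)*m))) := by ring
          _ = sgp k * (gg (α+β) m k * (X ^ ((α+β) * (((m:ℤ)+1) - (k+1)).toNat) * (X:R) ^ (eE α β (k+1)))) := by rw [he]
          _ = sgp k * ((X ^ ((α+β) * (((m:ℤ)+1) - (k+1)).toNat) * gg (α+β) m k) * (X:R) ^ (eE α β (k+1))) := by ring
      rw [Finset.sum_congr rfl e1]
      have hmap := Finset.sum_map (Icc (-(m:ℤ)) (m:ℤ)) (addRightEmbedding (1:ℤ))
        (fun k => (- sgp k) * ((X ^ ((α+β) * (((m:ℤ)+1) - k).toNat) * gg (α+β) m (k-1)) * (X:R) ^ (eE α β k)))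
      rw [Finset.map_add_right_Icc] at hmap
      simp only [addRightEmbedding_apply] at hmap
      rw [← hmap]
      rw [Finset.sum_subset (show Icc (-(m:ℤ)+1) ((m:ℤ)+1) ⊆ Icc (-(m:ℤ)-1) ((m:ℤ)+1) by
        apply Finset.Icc_subset_Icc <;> omega)]
      intro k hk hk2
      rw [Finset.mem_Icc] at hk hk2
      rw [gg_vanish (α+β) m (k-1) (by omega)]
      ring
    -- piece B
    have hB : (∑ k ∈ Icc (-(m:ℤ)) (m:ℤ), sgp k * (gg (α+β) m k * (X:R) ^ (eE α β k))) * X ^ (β + (α+β)*m)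
        = ∑ k ∈ Icc (-(m:ℤ)-1) ((m:ℤ)+1),
            (- sgp k) * ((X ^ ((α+β) * (((m:ℤ)+1) + k).toNat) * gg (α+β) m (k+1)) * (X:R) ^ (eE α β k)) := by
      rw [Finset.sum_mul]
      have e1 : ∀ k ∈ Icc (-(m:ℤ)) (m:ℤ),
          sgp k * (gg (α+β) m k * (X:R) ^ (eE α β k)) * X ^ (β + (α+β)*m)
          = (fun k => (- sgp k) * ((X ^ ((α+β) * (((m:ℤ)+1) + k).toNat) * gg (α+β) m (k+1)) * (X:R) ^ (eE α β k))) (k+(-1)) := by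
        intro k hk
        rw [Finset.mem_Icc] at hk
        simp only
        rw [show k + (-1:ℤ) = k - 1 by ring, sgp_sub_one, sub_add_cancel, neg_neg]
        have he : (X:R) ^ (eE α β k) * X ^ (β + (α+β)*m)
            = X ^ ((α+β) * (((m:ℤ)+1) + (k-1)).toNat) * (X:R) ^ (eE α β (k-1)) := by
          rw [← pow_add, ← pow_add]
          rw [show ((m:ℤ)+1) + (k-1) = (m:ℤ) + k by ring]
          rw [show eE α β k + (β + (α+β)*m) = β + (α+β)*m + eE α β k by ring]
          rw [eE_shift_down α β k m hk.1]
          ring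
        calc sgp k * (gg (α+β) m k * (X:R) ^ (eE α β k)) * X ^ (β + (α+β)*m)
            = sgp k * (gg (α+β) m k * ((X:R) ^ (eE α β k) * X ^ (β + (α+β)*m))) := by ring
          _ = sgp k * (gg (α+β) m k * (X ^ ((α+β) * (((m:ℤ)+1) + (k-1)).toNat) * (X:R) ^ (eE α β (k-1)))) := by rw [he]
          _ = sgp k * ((X ^ ((α+β) * (((m:ℤ)+1) + (k-1)).toNat) * gg (α+β) m k) * (X:R) ^ (eE α β (k-1))) := by ring
      rw [Finset.sum_congr rfl e1]
      have hmap := Finset.sum_map (Icc (-(m:ℤ)) (m:ℤ)) (addRightEmbedding (-1:ℤ))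
        (fun k => (- sgp k) * ((X ^ ((α+β) * (((m:ℤ)+1) + k).toNat) * gg (α+β) m (k+1)) * (X:R) ^ (eE α β k)))
      rw [Finset.map_add_right_Icc] at hmap
      simp only [addRightEmbedding_apply] at hmap
      rw [← hmap]
      rw [Finset.sum_subset (show Icc (-(m:ℤ)+(-1)) ((m:ℤ)+(-1)) ⊆ Icc (-(m:ℤ)-1) ((m:ℤ)+1) by
        apply Finset.Icc_subset_Icc <;> omega)]
      intro k hk hk2
      rw [Finset.mem_Icc] at hk hk2
      rw [gg_vanish (α+β) m (k+1) (by omega)]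
      ring
    rw [h1, hA, hB, ← Finset.sum_sub_distrib, ← Finset.sum_sub_distrib]
    rw [show Icc (-(m:ℤ)-1) ((m:ℤ)+1) = Icc (-((m:ℤ)+1)) ((m:ℤ)+1) by congr 1; ring]
    apply Finset.sum_congr rfl
    intro k hk
    rw [gg_succ]
    ring
end TD
end FJtest
namespace TD
open Finset PowerSeries

/-- generic theta series `∑_{k∈ℤ} (−1)^k q^{eE α β k}` -/
noncomputable def thetaS (α β : ℕ) : R :=
  1 + psum (fun k => ((-1 : ℚ)) ^ (k+1) •
      ((X:R) ^ (eE α β ((k:ℤ)+1)) + (X:R) ^ (eE α β (-(k:ℤ)-1))))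

lemma sgp_natCast (n : ℕ) : sgp ((n:ℤ)) = PowerSeries.C (R := ℚ) ((-1:ℚ)^n) := by
  rcases Nat.even_or_odd n with h | h
  · rw [sgp, if_pos (by exact_mod_cast h), h.neg_one_pow, map_one]
  · rw [sgp, if_neg (by simpa [Int.not_even_iff_odd] using (by exact_mod_cast h : Odd (n:ℤ))),
      h.neg_one_pow, map_neg, map_one]

lemma theta_trunc (w : ℤ → ℕ) (hw : w 0 = 0) (n : ℕ) :
    ∑ k ∈ Icc (-(n:ℤ)) (n:ℤ), sgp k * (X:R) ^ (w k)
      = 1 + ∑ j ∈ range n, ((-1:ℚ)^(j+1)) • ((X:R) ^ (w ((j:ℤ)+1)) + (X:R) ^ (w (-(j:ℤ)-1))) := by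
  induction n with
  | zero =>
    rw [show ((0:ℕ):ℤ) = (0:ℤ) by norm_num, icc_zero, Finset.sum_singleton, hw]
    simp [sgp]
  | succ n ih =>
    have hc : ((n+1:ℕ):ℤ) = (n:ℤ)+1 := by push_cast; ring
    rw [hc]
    have hset : Icc (-((n:ℤ)+1)) ((n:ℤ)+1)
        = insert (-((n:ℤ)+1)) (insert ((n:ℤ)+1) (Icc (-(n:ℤ)) (n:ℤ))) := by
      ext x
      simp only [Finset.mem_Icc, Finset.mem_insert]
      omega
    rw [hset, Finset.sum_insert (by simp only [Finset.mem_insert, Finset.mem_Icc]; omega),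
      Finset.sum_insert (by simp only [Finset.mem_Icc]; omega), ih,
      Finset.sum_range_succ]
    have h1 : sgp (-((n:ℤ)+1)) = sgp ((n:ℤ)+1) := by
      rw [← sgp_neg ((n:ℤ)+1)]
    have h2 : sgp ((n:ℤ)+1) = PowerSeries.C (R := ℚ) ((-1:ℚ)^(n+1)) := by
      rw [show (n:ℤ)+1 = ((n+1:ℕ):ℤ) by push_cast; ring, sgp_natCast]
    have h3 : ((-1:ℚ)^(n+1)) • ((X:R) ^ (w ((n:ℤ)+1)) + (X:R) ^ (w (-(n:ℤ)-1)))
        = PowerSeries.C (R := ℚ) ((-1:ℚ)^(n+1)) * (X:R) ^ (w ((n:ℤ)+1))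
          + PowerSeries.C (R := ℚ) ((-1:ℚ)^(n+1)) * (X:R) ^ (w (-(n:ℤ)-1)) := by
      rw [PowerSeries.smul_eq_C_mul, mul_add]
    rw [h1, h2, h3, show -((n:ℤ)+1) = -(n:ℤ)-1 by ring]
    ring

lemma eE_ge_succ (α β : ℕ) (hα : 1 ≤ α) (hβ : 1 ≤ β) (j : ℕ) :
    j + 1 ≤ eE α β ((j:ℤ)+1) ∧ j + 1 ≤ eE α β (-(j:ℤ)-1) := by
  constructor
  · have h := eE_ge_sq α β hα hβ ((j:ℤ)+1)
    have h2 : (((j:ℤ)+1).natAbs) = j+1 := by omega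
    rw [h2] at h
    have h3 : ((j:ℕ)+1 : ℤ) ≤ ((j:ℕ)+1:ℤ)^2 := by
      nlinarith [(by positivity : (0:ℤ) ≤ (j:ℤ))]
    push_cast at h h3 ⊢
    omega
  · have h := eE_ge_sq α β hα hβ (-(j:ℤ)-1)
    have h2 : ((-(j:ℤ)-1).natAbs) = j+1 := by omega
    rw [h2] at h
    have h3 : ((j:ℕ)+1 : ℤ) ≤ ((j:ℕ)+1:ℤ)^2 := by
      nlinarith [(by positivity : (0:ℤ) ≤ (j:ℤ))]
    push_cast at h h3 ⊢
    omega

lemma QQf_eq_range (s n : ℕ) : QQf s n = ∏ j ∈ range n, (1 - (X:R) ^ (s * (j+1))) := by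
  induction n with
  | zero => rw [QQf_zero, Finset.prod_range_zero]
  | succ n ih => rw [QQf_succ, Finset.prod_range_succ, ih]

lemma key_est (s : ℕ) (hs : 1 ≤ s) (m : ℕ) (k : ℤ) (hk : k.natAbs ≤ m) (n : ℕ)
    (hn : n + 1 ≤ s * (m + 1 - k.natAbs)) : Eqd n (QQf s m * gg s m k) 1 := by
  have hgg : gg s m k = gg s m ((k.natAbs : ℕ) : ℤ) := by
    rcases le_or_gt 0 k with h | h
    · rw [show ((k.natAbs : ℕ) : ℤ) = k by omega]
    · rw [show ((k.natAbs : ℕ) : ℤ) = -k by omega, gg_symm]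
  have hstar := star s hs m k.natAbs hk
  have hsplit : QQf s m = QQf s (m - k.natAbs) * ∏ i ∈ Ioc (m - k.natAbs) m, (1 - (X:R) ^ (s*i)) := by
    rw [QQf, QQf, Finset.prod_Ioc_consecutive _ (by omega : 0 ≤ m - k.natAbs) (by omega : m - k.natAbs ≤ m)]
  have heq : QQf s m * gg s m k
      = (∏ i ∈ Ioc (m - k.natAbs) m, (1 - (X:R) ^ (s*i)))
        * ∏ i ∈ Ioc (m + k.natAbs) (2*m), (1 - (X:R) ^ (s*i)) := by
    rw [hgg, hsplit, mul_comm (QQf s (m - k.natAbs)) _, mul_assoc, hstar]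
  rw [heq]
  have h1 : Eqd n (∏ i ∈ Ioc (m - k.natAbs) m, (1 - (X:R) ^ (s*i))) 1 := by
    apply Eqd.prod_one
    intro i hi
    rw [Finset.mem_Ioc] at hi
    apply eqd_X_pow_one_sub
    have : s * (m + 1 - k.natAbs) ≤ s * i := Nat.mul_le_mul_left s (by omega)
    omega
  have h2 : Eqd n (∏ i ∈ Ioc (m + k.natAbs) (2*m), (1 - (X:R) ^ (s*i))) 1 := by
    apply Eqd.prod_one
    intro i hi
    rw [Finset.mem_Ioc] at hi
    apply eqd_X_pow_one_sub
    have : s * (m + 1 - k.natAbs) ≤ s * i := Nat.mul_le_mul_left s (by omega)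
    omega
  have := h1.mul h2
  simpa using this

theorem JTP (α β : ℕ) (hα : 1 ≤ α) (hβ : 1 ≤ β) :
    thetaS α β = pprod (fun j => 1 - (X:R) ^ ((α+β)*(j+1)))
      * pprod (fun j => (1 - (X:R) ^ (α + (α+β)*j)) * (1 - (X:R) ^ (β + (α+β)*j))) := by
  apply eqd_ext
  intro d
  set m := d + 1 with hm
  -- LHS truncation
  have hterm : ∀ j : ℕ, Eqd j (((-1 : ℚ)) ^ (j+1) •
      ((X:R) ^ (eE α β ((j:ℤ)+1)) + (X:R) ^ (eE α β (-(j:ℤ)-1)))) 0 := by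
    intro j
    intro i hi
    rw [map_smul, map_add, PowerSeries.coeff_X_pow, PowerSeries.coeff_X_pow]
    have h := eE_ge_succ α β hα hβ j
    rw [if_neg (by omega), if_neg (by omega)]
    simp
  have eL : Eqd d (thetaS α β) (∑ k ∈ Icc (-(m:ℤ)) (m:ℤ), sgp k * (X:R) ^ (eE α β k)) := by
    have h1 : Eqd d (thetaS α β) (1 + ∑ j ∈ range m, ((-1 : ℚ)) ^ (j+1) •
        ((X:R) ^ (eE α β ((j:ℤ)+1)) + (X:R) ^ (eE α β (-(j:ℤ)-1)))) := by
      rw [thetaS]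
      exact (Eqd.refl d 1).add (eqd_psum hterm (by omega))
    have h2 := theta_trunc (fun k => eE α β k) (eE_zero α β) m
    exact h1.trans (Eqd.of_eq h2.symm)
  -- RHS truncation
  have hyp1 : ∀ j : ℕ, Eqd j (1 - (X:R) ^ ((α+β)*(j+1))) 1 := by
    intro j
    apply eqd_X_pow_one_sub
    nlinarith
  have hyp2 : ∀ j : ℕ, Eqd j ((1 - (X:R) ^ (α + (α+β)*j)) * (1 - (X:R) ^ (β + (α+β)*j))) 1 := by
    intro j
    have h1 : Eqd j (1 - (X:R) ^ (α + (α+β)*j)) 1 := by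
      apply eqd_X_pow_one_sub; nlinarith
    have h2 : Eqd j (1 - (X:R) ^ (β + (α+β)*j)) 1 := by
      apply eqd_X_pow_one_sub; nlinarith
    simpa using h1.mul h2
  have eR : Eqd d (pprod (fun j => 1 - (X:R) ^ ((α+β)*(j+1)))
      * pprod (fun j => (1 - (X:R) ^ (α + (α+β)*j)) * (1 - (X:R) ^ (β + (α+β)*j))))
      (∑ k ∈ Icc (-(m:ℤ)) (m:ℤ), sgp k * ((QQf (α+β) m * gg (α+β) m k) * (X:R) ^ (eE α β k))) := by
    have h1 := (eqd_pprod hyp1 (show d < m by omega)).mul (eqd_pprod hyp2 (show d < m by omega))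
    apply h1.trans
    apply Eqd.of_eq
    rw [← QQf_eq_range, FJ, Finset.mul_sum]
    apply Finset.sum_congr rfl
    intro k hk
    ring
  -- middle comparison
  have eM : Eqd d (∑ k ∈ Icc (-(m:ℤ)) (m:ℤ), sgp k * (X:R) ^ (eE α β k))
      (∑ k ∈ Icc (-(m:ℤ)) (m:ℤ), sgp k * ((QQf (α+β) m * gg (α+β) m k) * (X:R) ^ (eE α β k))) := by
    apply Eqd.sum
    intro k hk
    rw [Finset.mem_Icc] at hk
    have hka : k.natAbs ≤ m := by omega
    by_cases he : eE α β k ≤ d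
    · have hs2 : 2 ≤ α + β := by omega
      have hest : (d - eE α β k) + 1 ≤ (α+β) * (m + 1 - k.natAbs) := by
        have h1 : (k.natAbs:ℤ)^2 ≤ (eE α β k : ℤ) := eE_ge_sq α β hα hβ k
        have hmz : (m:ℤ) = (d:ℤ) + 1 := by omega
        have hab : (2:ℤ) ≤ (α:ℤ) + β := by exact_mod_cast hs2
        have hne : (0:ℤ) ≤ (d:ℤ) + 2 - k.natAbs := by omega
        zify [he, show k.natAbs ≤ m + 1 by omega]
        nlinarith [sq_nonneg ((k.natAbs:ℤ) - 1), h1, hmz, Int.abs_eq_natAbs k,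
          mul_nonneg (by omega : (0:ℤ) ≤ (α:ℤ) + β - 2) hne]
      have hkey := key_est (α+β) (by omega) m k hka (d - eE α β k) hest
      have hshift := hkey.mul_X_pow (eE α β k)
      rw [one_mul] at hshift
      have hshift2 : Eqd d ((QQf (α+β) m * gg (α+β) m k) * (X:R) ^ (eE α β k)) ((X:R) ^ (eE α β k)) := by
        have : d - eE α β k + eE α β k = d := by omega
        rw [this] at hshift
        exact hshift
      exact ((Eqd.refl d (sgp k)).mul hshift2).symm
    · have h1 : Eqd d (sgp k * (X:R) ^ (eE α β k)) 0 := eqd_mul_X_pow_zero (by omega) _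
      have h2 : Eqd d (sgp k * ((QQf (α+β) m * gg (α+β) m k) * (X:R) ^ (eE α β k))) 0 := by
        have h3 : Eqd d ((sgp k * (QQf (α+β) m * gg (α+β) m k)) * (X:R) ^ (eE α β k)) 0 :=
          eqd_mul_X_pow_zero (by omega) _
        exact (Eqd.of_eq (by ring)).trans h3
      exact h1.trans h2.symm
  intro i hi
  rw [eL i hi, eM i hi, ← eR i hi]

end TD
namespace TD
open Finset PowerSeries

lemma eqd_prod_filter {d : ℕ} {S : Finset ℕ} (p : ℕ → Prop) [DecidablePred p] (f : ℕ → R)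
    (h : ∀ j ∈ S, ¬ p j → Eqd d (f j) 1) :
    Eqd d (∏ j ∈ S, f j) (∏ j ∈ S.filter p, f j) := by
  rw [← Finset.prod_filter_mul_prod_filter_not S p f]
  have h2 : Eqd d (∏ j ∈ S.filter (fun j => ¬ p j), f j) 1 := by
    apply Eqd.prod_one
    intro j hj
    rw [Finset.mem_filter] at hj
    exact h j hj.1 hj.2
  have := (Eqd.refl d (∏ j ∈ S.filter p, f j)).mul h2
  simpa using this

/-- truncation of an arithmetic-progression product into canonical indicator form -/
lemma eqd_AP (α s : ℕ) (hα : 1 ≤ α) (hαs : α ≤ s) (d : ℕ) :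
    Eqd d (pprod fun j => 1 - (X:R) ^ (α + s*j))
      (∏ n ∈ range (d+1), (1 - (X:R) ^ (n+1)) ^ (if (n+1) % s = α % s then 1 else 0)) := by
  have hyp : ∀ j : ℕ, Eqd j (1 - (X:R) ^ (α + s*j)) 1 := by
    intro j
    apply eqd_X_pow_one_sub
    nlinarith
  have h1 : Eqd d (pprod fun j => 1 - (X:R) ^ (α + s*j))
      (∏ j ∈ range (d+1), (1 - (X:R) ^ (α + s*j))) := eqd_pprod hyp (by omega)
  apply h1.trans
  -- filter both sides by "exponent ≤ d"
  have h2 : Eqd d (∏ j ∈ range (d+1), (1 - (X:R) ^ (α + s*j)))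
      (∏ j ∈ (range (d+1)).filter (fun j => α + s*j ≤ d), (1 - (X:R) ^ (α + s*j))) := by
    apply eqd_prod_filter
    intro j hj hj2
    exact eqd_X_pow_one_sub (by omega)
  have h3 : Eqd d (∏ n ∈ range (d+1), (1 - (X:R) ^ (n+1)) ^ (if (n+1) % s = α % s then 1 else 0))
      (∏ n ∈ (range (d+1)).filter (fun n => (n+1) % s = α % s ∧ n + 1 ≤ d),
        (1 - (X:R) ^ (n+1)) ^ (if (n+1) % s = α % s then 1 else 0)) := by
    apply eqd_prod_filter
    intro n hn hn2
    by_cases hc : (n+1) % s = α % s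
    · have : ¬ (n+1 ≤ d) := fun hh => hn2 ⟨hc, hh⟩
      rw [if_pos hc, pow_one]
      exact eqd_X_pow_one_sub (by omega)
    · rw [if_neg hc, pow_zero]
      exact Eqd.refl d 1
  apply h2.trans
  apply Eqd.trans _ h3.symm
  apply Eqd.of_eq
  apply Finset.prod_nbij' (fun j => α + s*j - 1) (fun n => (n + 1 - α) / s)
  · intro j hj
    rw [Finset.mem_filter, Finset.mem_range] at hj ⊢
    have h4 : α + s * j - 1 + 1 = α + s * j := by
      have : 1 ≤ α + s * j := by omega
      omega
    refine ⟨by omega, by rw [h4]; exact Nat.add_mul_mod_self_left α s j, by omega⟩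
  · intro n hn
    rw [Finset.mem_filter, Finset.mem_range] at hn ⊢
    obtain ⟨hn1, hn2, hn3⟩ := hn
    -- α ≤ n+1
    have hle : α ≤ n + 1 := by
      by_contra hlt
      push_neg at hlt
      rcases Nat.lt_or_ge α s with hc | hc
      · have e1 : α % s = α := Nat.mod_eq_of_lt hc
        have e2 : (n+1) % s = n+1 := Nat.mod_eq_of_lt (by omega)
        omega
      · have hceq : α = s := by omega
        have e1 : α % s = 0 := by rw [hceq, Nat.mod_self]
        have e2 : (n+1) % s = n+1 := Nat.mod_eq_of_lt (by omega)
        omega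
    have hdvd : s ∣ (n + 1 - α) := (Nat.modEq_iff_dvd' hle).mp (Nat.ModEq.symm hn2)
    obtain ⟨c, hc⟩ := hdvd
    rw [hc, Nat.mul_div_cancel_left c (by omega : 0 < s)]
    constructor
    · have : c ≤ s * c := Nat.le_mul_of_pos_left c (by omega)
      omega
    · omega
  · intro j hj
    rw [Finset.mem_filter, Finset.mem_range] at hj
    have h4 : α + s * j - 1 + 1 = α + s * j := by omega
    rw [h4, Nat.add_sub_cancel_left, Nat.mul_div_cancel_left j (by omega : 0 < s)]
  · intro n hn
    rw [Finset.mem_filter, Finset.mem_range] at hn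
    obtain ⟨hn1, hn2, hn3⟩ := hn
    have hle : α ≤ n + 1 := by
      by_contra hlt
      push_neg at hlt
      rcases Nat.lt_or_ge α s with hc | hc
      · have e1 : α % s = α := Nat.mod_eq_of_lt hc
        have e2 : (n+1) % s = n+1 := Nat.mod_eq_of_lt (by omega)
        omega
      · have hceq : α = s := by omega
        have e1 : α % s = 0 := by rw [hceq, Nat.mod_self]
        have e2 : (n+1) % s = n+1 := Nat.mod_eq_of_lt (by omega)
        omega
    have hdvd : s ∣ (n + 1 - α) := (Nat.modEq_iff_dvd' hle).mp (Nat.ModEq.symm hn2)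
    obtain ⟨c, hc⟩ := hdvd
    rw [hc, Nat.mul_div_cancel_left c (by omega : 0 < s)]
    omega
  · intro j hj
    rw [Finset.mem_filter, Finset.mem_range] at hj
    have h4 : α + s * j - 1 + 1 = α + s * j := by omega
    have hmod : (α + s * j - 1 + 1) % s = α % s := by
      rw [h4]; exact Nat.add_mul_mod_self_left α s j
    rw [if_pos hmod, pow_one, h4]

lemma P_eq_AP (a : ℕ) : P a = pprod (fun j => 1 - (X:R) ^ (a + a*j)) := by
  have hf : (fun k => 1 - (X:R) ^ (a*(k+1))) = (fun j => 1 - (X:R) ^ (a + a*j)) := by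
    funext k
    rw [Nat.mul_add, Nat.mul_one, Nat.add_comm]
  unfold P
  rw [hf]

lemma eqd_P (a : ℕ) (ha : 1 ≤ a) (d : ℕ) :
    Eqd d (P a) (∏ n ∈ range (d+1), (1 - (X:R) ^ (n+1)) ^ (if (n+1) % a = 0 then 1 else 0)) := by
  rw [P_eq_AP]
  have h := eqd_AP a a ha le_rfl d
  simpa [Nat.mod_self] using h

end TD
namespace TD
open Finset PowerSeries

lemma pprod_mul (f g : ℕ → R) (hf : ∀ j, Eqd j (f j) 1) (hg : ∀ j, Eqd j (g j) 1) :
    pprod (fun j => f j * g j) = pprod f * pprod g := by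
  apply eqd_ext; intro d
  have hfg : ∀ j, Eqd j (f j * g j) 1 := fun j => by simpa using (hf j).mul (hg j)
  have h1 := eqd_pprod hfg (show d < d+1 by omega)
  have h2 := (eqd_pprod hf (show d < d+1 by omega)).mul (eqd_pprod hg (show d < d+1 by omega))
  exact (h1.trans (Eqd.of_eq Finset.prod_mul_distrib)).trans h2.symm

lemma one_sub_hyp (α s : ℕ) (hα : 1 ≤ α) (hs : 1 ≤ s) :
    ∀ j : ℕ, Eqd j (1 - (X:R) ^ (α + s*j)) 1 := by
  intro j
  apply eqd_X_pow_one_sub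
  nlinarith

lemma M1 : P 18 * pprod (fun j => 1 - (X:R) ^ (9 + 18*j)) = P 9 := by
  apply eqd_ext; intro d
  have h18 := eqd_P 18 (by norm_num) d
  have h9' := eqd_AP 9 18 (by norm_num) (by norm_num) d
  have h9 := eqd_P 9 (by norm_num) d
  apply ((h18.mul h9').trans _).trans h9.symm
  apply Eqd.of_eq
  rw [← Finset.prod_mul_distrib]
  apply Finset.prod_congr rfl
  intro n hn
  rw [← pow_add]
  congr 1
  split_ifs <;> omega

lemma I1 : thetaS 9 9 * P 18 = P 9 ^ 2 := by
  have hJ := JTP 9 9 (by norm_num) (by norm_num)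
  norm_num at hJ
  have hpair : pprod (fun j => (1 - (X:R) ^ (9 + 18*j)) * (1 - (X:R) ^ (9 + 18*j)))
      = pprod (fun j => 1 - (X:R) ^ (9 + 18*j)) * pprod (fun j => 1 - (X:R) ^ (9 + 18*j)) :=
    pprod_mul _ _ (one_sub_hyp 9 18 (by norm_num) (by norm_num))
      (one_sub_hyp 9 18 (by norm_num) (by norm_num))
  have hP18 : P 18 = pprod (fun j => 1 - (X:R) ^ (18*(j+1))) := rfl
  rw [← hP18] at hJ
  rw [hJ, hpair]
  have hrw : (P 18 * (pprod (fun j => 1 - (X:R) ^ (9 + 18*j)) * pprod (fun j => 1 - (X:R) ^ (9 + 18*j)))) * P 18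
      = (P 18 * pprod (fun j => 1 - (X:R) ^ (9 + 18*j))) ^ 2 := by ring
  rw [hrw, M1]

lemma M2 : pprod (fun j => 1 - (X:R) ^ (3 + 18*j)) * pprod (fun j => 1 - (X:R) ^ (15 + 18*j))
    * (P 6 * P 9) = P 3 * P 18 := by
  apply eqd_ext; intro d
  have h3' := eqd_AP 3 18 (by norm_num) (by norm_num) d
  have h15' := eqd_AP 15 18 (by norm_num) (by norm_num) d
  have h6 := eqd_P 6 (by norm_num) d
  have h9 := eqd_P 9 (by norm_num) d
  have h3 := eqd_P 3 (by norm_num) d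
  have h18 := eqd_P 18 (by norm_num) d
  apply (((h3'.mul h15').mul (h6.mul h9)).trans _).trans (h3.mul h18).symm
  apply Eqd.of_eq
  rw [← Finset.prod_mul_distrib, ← Finset.prod_mul_distrib, ← Finset.prod_mul_distrib,
    ← Finset.prod_mul_distrib]
  apply Finset.prod_congr rfl
  intro n hn
  rw [← pow_add, ← pow_add, ← pow_add, ← pow_add]
  congr 1
  split_ifs <;> omega

lemma I2 : thetaS 3 15 * (P 6 * P 9) = P 3 * P 18 ^ 2 := by
  have hJ := JTP 3 15 (by norm_num) (by norm_num)
  norm_num at hJ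
  have hpair : pprod (fun j => (1 - (X:R) ^ (3 + 18*j)) * (1 - (X:R) ^ (15 + 18*j)))
      = pprod (fun j => 1 - (X:R) ^ (3 + 18*j)) * pprod (fun j => 1 - (X:R) ^ (15 + 18*j)) :=
    pprod_mul _ _ (one_sub_hyp 3 18 (by norm_num) (by norm_num))
      (one_sub_hyp 15 18 (by norm_num) (by norm_num))
  have hP18 : P 18 = pprod (fun j => 1 - (X:R) ^ (18*(j+1))) := rfl
  rw [← hP18] at hJ
  rw [hJ, hpair]
  have hrw : P 18 * (pprod (fun j => 1 - (X:R) ^ (3 + 18*j)) * pprod (fun j => 1 - (X:R) ^ (15 + 18*j))) * (P 6 * P 9)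
      = (pprod (fun j => 1 - (X:R) ^ (3 + 18*j)) * pprod (fun j => 1 - (X:R) ^ (15 + 18*j)) * (P 6 * P 9)) * P 18 := by
    ring
  rw [hrw, M2]
  ring

end TD
namespace TD
open Finset PowerSeries

/-- square exponent -/
def f2 (k : ℤ) : ℕ := (k*k).toNat

lemma f2_cast (k : ℤ) : (f2 k : ℤ) = k * k := Int.toNat_of_nonneg (mul_self_nonneg k)

lemma f2_zero : f2 0 = 0 := rfl

lemma f2_neg (k : ℤ) : f2 (-k) = f2 k := by
  unfold f2
  rw [show (-k) * (-k) = k * k by ring]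

lemma f2_natsucc (j : ℕ) : f2 ((j:ℤ)+1) = (j+1)^2 := by
  have h := f2_cast ((j:ℤ)+1)
  have h2 : ((j:ℤ)+1) * ((j:ℤ)+1) = ((((j:ℕ)+1)^2 : ℕ) : ℤ) := by push_cast; ring
  omega

lemma f2_negsucc (j : ℕ) : f2 (-(j:ℤ)-1) = (j+1)^2 := by
  rw [show -(j:ℤ)-1 = -((j:ℤ)+1) by ring, f2_neg, f2_natsucc]

lemma sgp_mod (a b : ℤ) (h : a % 2 = b % 2) : sgp a = sgp b := by
  have hiff : Even a ↔ Even b := by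
    rw [Int.even_iff, Int.even_iff]
    constructor <;> intro <;> omega
  rw [sgp, sgp, if_congr hiff rfl rfl]

lemma nE1 (k : ℤ) : f2 (3*k) = eE 9 9 k := by
  have h1 := eE_cast 9 9 k
  have hf := f2_cast (3*k)
  have hr : (9:ℤ)*(k*(k+1)) + 9*(k*(k-1)) = 18*(k*k) := by ring
  have hf2 : (3*k)*(3*k) = 9*(k*k) := by ring
  have : (f2 (3*k) : ℤ) = (eE 9 9 k : ℤ) := by
    push_cast at h1
    linarith
  exact_mod_cast this

lemma nE2 (k : ℤ) : f2 (3*k-1) = eE 3 15 k + 1 := by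
  have h1 := eE_cast 3 15 k
  have hf := f2_cast (3*k-1)
  have hr : (3:ℤ)*(k*(k+1)) + 15*(k*(k-1)) = 18*(k*k) - 12*k := by ring
  have hf2 : (3*k-1)*(3*k-1) = 9*(k*k) - 6*k + 1 := by ring
  have : (f2 (3*k-1) : ℤ) = (eE 3 15 k : ℤ) + 1 := by
    push_cast at h1
    linarith
  exact_mod_cast this

lemma refl_sum (n : ℕ) (G : ℤ → R) :
    ∑ k ∈ Icc (-(n:ℤ)) (n:ℤ), G k = ∑ k ∈ Icc (-(n:ℤ)) (n:ℤ), G (-k) := by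
  apply Finset.sum_nbij' (fun k => -k) (fun k => -k)
  · intro a ha
    rw [Finset.mem_Icc] at ha ⊢
    omega
  · intro a ha
    rw [Finset.mem_Icc] at ha ⊢
    omega
  · intro a _; ring
  · intro a _; ring
  · intro a _
    rw [neg_neg]

lemma split3 (m : ℕ) (F : ℤ → R) :
    ∑ j ∈ Icc (-(3*(m:ℤ)+1)) (3*(m:ℤ)+1), F j
      = ∑ k ∈ Icc (-(m:ℤ)) (m:ℤ), (F (3*k-1) + F (3*k) + F (3*k+1)) := by
  induction m with
  | zero =>
    have h1 : Icc (-(3*((0:ℕ):ℤ)+1)) (3*((0:ℕ):ℤ)+1) = Icc (-1 : ℤ) 1 := by norm_num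
    have h2 : Icc (-((0:ℕ):ℤ)) ((0:ℕ):ℤ) = Icc (0:ℤ) 0 := by norm_num
    rw [h1, h2]
    have h3 : Icc (-1:ℤ) 1 = insert (-1:ℤ) (insert (0:ℤ) ({1} : Finset ℤ)) := by
      ext x
      simp only [Finset.mem_Icc, Finset.mem_insert, Finset.mem_singleton]
      omega
    rw [h3, Finset.sum_insert (by simp only [Finset.mem_insert, Finset.mem_singleton]; omega),
      Finset.sum_insert (by simp only [Finset.mem_singleton]; omega), Finset.sum_singleton,
      Finset.Icc_self, Finset.sum_singleton]
    norm_num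
    ring
  | succ m ih =>
    have hc : ((m+1:ℕ):ℤ) = (m:ℤ)+1 := by push_cast; ring
    rw [hc]
    have hL : Icc (-(3*((m:ℤ)+1)+1)) (3*((m:ℤ)+1)+1)
        = insert (-(3*(m:ℤ)+4)) (insert (3*(m:ℤ)+4)
          (insert (-(3*(m:ℤ)+3)) (insert (3*(m:ℤ)+3)
          (insert (-(3*(m:ℤ)+2)) (insert (3*(m:ℤ)+2)
          (Icc (-(3*(m:ℤ)+1)) (3*(m:ℤ)+1))))))) := by
      ext x
      simp only [Finset.mem_Icc, Finset.mem_insert]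
      omega
    have hR : Icc (-((m:ℤ)+1)) ((m:ℤ)+1)
        = insert (-((m:ℤ)+1)) (insert ((m:ℤ)+1) (Icc (-(m:ℤ)) (m:ℤ))) := by
      ext x
      simp only [Finset.mem_Icc, Finset.mem_insert]
      omega
    rw [hL, hR]
    rw [Finset.sum_insert (by simp only [Finset.mem_insert, Finset.mem_Icc]; omega),
      Finset.sum_insert (by simp only [Finset.mem_insert, Finset.mem_Icc]; omega),
      Finset.sum_insert (by simp only [Finset.mem_insert, Finset.mem_Icc]; omega),
      Finset.sum_insert (by simp only [Finset.mem_insert, Finset.mem_Icc]; omega),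
      Finset.sum_insert (by simp only [Finset.mem_insert, Finset.mem_Icc]; omega),
      Finset.sum_insert (by simp only [Finset.mem_Icc]; omega),
      Finset.sum_insert (by simp only [Finset.mem_insert, Finset.mem_Icc]; omega),
      Finset.sum_insert (by simp only [Finset.mem_Icc]; omega), ih]
    have e1 : 3*(-((m:ℤ)+1))-1 = -(3*(m:ℤ)+4) := by ring
    have e2 : 3*(-((m:ℤ)+1)) = -(3*(m:ℤ)+3) := by ring
    have e3 : 3*(-((m:ℤ)+1))+1 = -(3*(m:ℤ)+2) := by ring
    have e4 : 3*((m:ℤ)+1)-1 = 3*(m:ℤ)+2 := by ring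
    have e5 : 3*((m:ℤ)+1) = 3*(m:ℤ)+3 := by ring
    have e6 : 3*((m:ℤ)+1)+1 = 3*(m:ℤ)+4 := by ring
    rw [e1, e3, e2, e6, e4, e5]
    ring

/-- truncation of a generic theta series -/
lemma thetaS_trunc (α β : ℕ) (hα : 1 ≤ α) (hβ : 1 ≤ β) (d m : ℕ) (hdm : d < m) :
    Eqd d (thetaS α β) (∑ k ∈ Icc (-(m:ℤ)) (m:ℤ), sgp k * (X:R) ^ (eE α β k)) := by
  have hterm : ∀ j : ℕ, Eqd j (((-1 : ℚ)) ^ (j+1) •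
      ((X:R) ^ (eE α β ((j:ℤ)+1)) + (X:R) ^ (eE α β (-(j:ℤ)-1)))) 0 := by
    intro j
    intro i hi
    rw [map_smul, map_add, PowerSeries.coeff_X_pow, PowerSeries.coeff_X_pow]
    have h := eE_ge_succ α β hα hβ j
    rw [if_neg (by omega), if_neg (by omega)]
    simp
  have h1 : Eqd d (thetaS α β) (1 + ∑ j ∈ range m, ((-1 : ℚ)) ^ (j+1) •
      ((X:R) ^ (eE α β ((j:ℤ)+1)) + (X:R) ^ (eE α β (-(j:ℤ)-1)))) := by
    rw [thetaS]
    exact (Eqd.refl d 1).add (eqd_psum hterm (by omega))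
  exact h1.trans (Eqd.of_eq (theta_trunc (fun k => eE α β k) (eE_zero α β) m).symm)

/-- truncation of phiNeg -/
lemma phiNeg_trunc (d m : ℕ) (hdm : d < m) :
    Eqd d phiNeg (∑ k ∈ Icc (-(m:ℤ)) (m:ℤ), sgp k * (X:R) ^ (f2 k)) := by
  have hterm : ∀ j : ℕ, Eqd j (((2 : ℚ) * (-1) ^ (j + 1)) • (X : R) ^ ((j + 1) ^ 2)) 0 := by
    intro j
    intro i hi
    rw [map_smul, PowerSeries.coeff_X_pow]
    rw [if_neg (by nlinarith)]
    simp
  have h1 : Eqd d phiNeg (1 + ∑ j ∈ range m,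
      ((2 : ℚ) * (-1) ^ (j + 1)) • (X : R) ^ ((j + 1) ^ 2)) := by
    rw [phiNeg]
    exact (Eqd.refl d 1).add (eqd_psum hterm (by omega))
  apply h1.trans
  apply Eqd.of_eq
  rw [theta_trunc f2 f2_zero m]
  congr 1
  apply Finset.sum_congr rfl
  intro j hj
  rw [f2_natsucc, f2_negsucc, smul_add, ← add_smul]
  congr 1
  ring

/-- the 3-dissection rearrangement -/
lemma S1 : phiNeg = thetaS 9 9 - (PowerSeries.C (R := ℚ) 2 * X) * thetaS 3 15 := by
  apply eqd_ext
  intro d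
  set m := d + 1 with hm
  -- RHS truncations
  have hT9 := thetaS_trunc 9 9 (by norm_num) (by norm_num) d m (by omega)
  have hT3 := thetaS_trunc 3 15 (by norm_num) (by norm_num) d m (by omega)
  have hRHS : Eqd d (thetaS 9 9 - (PowerSeries.C (R := ℚ) 2 * X) * thetaS 3 15)
      ((∑ k ∈ Icc (-(m:ℤ)) (m:ℤ), sgp k * (X:R) ^ (eE 9 9 k))
        - ∑ k ∈ Icc (-(m:ℤ)) (m:ℤ), sgp k * (PowerSeries.C (R := ℚ) 2 * (X:R) ^ (eE 3 15 k + 1))) := by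
    apply Eqd.sub hT9
    apply ((Eqd.refl d (PowerSeries.C (R := ℚ) 2 * X)).mul hT3).trans
    apply Eqd.of_eq
    rw [Finset.mul_sum]
    apply Finset.sum_congr rfl
    intro k hk
    rw [pow_succ]
    ring
  -- LHS truncation at 3m+1
  have hL := phiNeg_trunc d (3*m+1) (by omega)
  have hcast : ((3*m+1 : ℕ) : ℤ) = 3*(m:ℤ)+1 := by push_cast; ring
  rw [hcast] at hL
  rw [split3 m (fun j => sgp j * (X:R) ^ (f2 j))] at hL
  apply hL.trans
  apply Eqd.trans _ hRHS.symm
  apply Eqd.of_eq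
  have hsplit : ∑ k ∈ Icc (-(m:ℤ)) (m:ℤ),
      ((fun j => sgp j * (X:R) ^ (f2 j)) (3*k-1) + (fun j => sgp j * (X:R) ^ (f2 j)) (3*k)
        + (fun j => sgp j * (X:R) ^ (f2 j)) (3*k+1))
      = (∑ k ∈ Icc (-(m:ℤ)) (m:ℤ), sgp (3*k-1) * (X:R) ^ (f2 (3*k-1)))
        + (∑ k ∈ Icc (-(m:ℤ)) (m:ℤ), sgp (3*k) * (X:R) ^ (f2 (3*k)))
        + (∑ k ∈ Icc (-(m:ℤ)) (m:ℤ), sgp (3*k+1) * (X:R) ^ (f2 (3*k+1))) := by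
    rw [← Finset.sum_add_distrib, ← Finset.sum_add_distrib]
  rw [hsplit]
  -- reflect the third sum
  have hrefl : ∑ k ∈ Icc (-(m:ℤ)) (m:ℤ), sgp (3*k+1) * (X:R) ^ (f2 (3*k+1))
      = ∑ k ∈ Icc (-(m:ℤ)) (m:ℤ), sgp (3*k-1) * (X:R) ^ (f2 (3*k-1)) := by
    rw [refl_sum m (fun k => sgp (3*k+1) * (X:R) ^ (f2 (3*k+1)))]
    apply Finset.sum_congr rfl
    intro k hk
    have h1 : 3 * (-k) + 1 = -(3*k-1) := by ring
    rw [h1, f2_neg, sgp_neg]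
  rw [hrefl]
  -- now per-k identities
  have hper : ∀ k ∈ Icc (-(m:ℤ)) (m:ℤ),
      sgp (3*k-1) * (X:R) ^ (f2 (3*k-1)) = - (sgp k * (X:R) ^ (eE 3 15 k + 1)) := by
    intro k hk
    rw [nE2 k]
    have hs : sgp (3*k-1) = - sgp k := by
      rw [sgp_mod (3*k-1) (k-1) (by omega), sgp_sub_one]
    rw [hs]
    ring
  have h3k : ∀ k ∈ Icc (-(m:ℤ)) (m:ℤ),
      sgp (3*k) * (X:R) ^ (f2 (3*k)) = sgp k * (X:R) ^ (eE 9 9 k) := by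
    intro k hk
    rw [nE1 k, sgp_mod (3*k) k (by omega)]
  rw [Finset.sum_congr rfl hper, Finset.sum_congr rfl h3k]
  have hC2 : (PowerSeries.C (R := ℚ) 2 : R) = 2 := by
    rw [show (2:ℚ) = (1:ℚ)+1 by norm_num, map_add, map_one]
    norm_num
  have hneg : ∑ k ∈ Icc (-(m:ℤ)) (m:ℤ), -(sgp k * (X:R) ^ (eE 3 15 k + 1))
      = -(∑ k ∈ Icc (-(m:ℤ)) (m:ℤ), sgp k * (X:R) ^ (eE 3 15 k + 1)) := by
    rw [Finset.sum_neg_distrib]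
  have hfin : ∑ k ∈ Icc (-(m:ℤ)) (m:ℤ), sgp k * ((2:R) * (X:R) ^ (eE 3 15 k + 1))
      = (∑ k ∈ Icc (-(m:ℤ)) (m:ℤ), sgp k * (X:R) ^ (eE 3 15 k + 1))
        + ∑ k ∈ Icc (-(m:ℤ)) (m:ℤ), sgp k * (X:R) ^ (eE 3 15 k + 1) := by
    rw [← Finset.sum_add_distrib]
    apply Finset.sum_congr rfl
    intro k hk
    ring
  rw [hneg, hC2, hfin]
  ring

end TD
namespace TD
open Finset PowerSeries

lemma constC_P (a : ℕ) (ha : 1 ≤ a) : PowerSeries.constantCoeff (P a) = 1 := by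
  rw [← PowerSeries.coeff_zero_eq_constantCoeff_apply, P, coeff_pprod, Finset.prod_range_one,
    map_sub, PowerSeries.coeff_X_pow, if_neg (by omega)]
  simp

lemma P_ne (a : ℕ) (ha : 1 ≤ a) : P a ≠ 0 := by
  intro h
  have hc := constC_P a ha
  rw [h] at hc
  simp at hc

lemma div_helper (x y z : R) (hy : PowerSeries.constantCoeff y ≠ 0) (h : x * y = z) :
    z * y⁻¹ = x := by
  rw [← h, mul_assoc, PowerSeries.mul_inv_cancel y hy, mul_one]

end TD

/-- The 3-dissection of `φ(−q)² = (q;q)_∞²/(−q;q)_∞²`: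
`φ(−q)² = (q^9;q^9)_∞^4/(q^{18};q^{18})_∞²
  − 4q·(q^{18};q^{18})_∞ (q^9;q^9)_∞ (q^3;q^3)_∞/(q^6;q^6)_∞
  + 4q²·(q^{18};q^{18})_∞^4 (q^3;q^3)_∞²/((q^9;q^9)_∞² (q^6;q^6)_∞²)`. -/
theorem phi_neg_sq_three_dissection :
    phiNeg ^ 2 =
      P 9 ^ 4 * (P 18 ^ 2)⁻¹ -
        (PowerSeries.C (R := ℚ) 4) * X * (P 18 * P 9 * P 3 * (P 6)⁻¹) +
        (PowerSeries.C (R := ℚ) 4) * X ^ 2 * (P 18 ^ 4 * P 3 ^ 2 * (P 9 ^ 2 * P 6 ^ 2)⁻¹) := by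
  open TD in
  have c18 : PowerSeries.constantCoeff (P 18 ^ 2) ≠ 0 := by
    rw [map_pow, TD.constC_P 18 (by norm_num)]; norm_num
  have c6 : PowerSeries.constantCoeff (P 6) ≠ 0 := by
    rw [TD.constC_P 6 (by norm_num)]; norm_num
  have c69 : PowerSeries.constantCoeff (P 9 ^ 2 * P 6 ^ 2) ≠ 0 := by
    rw [map_mul, map_pow, map_pow, TD.constC_P 9 (by norm_num), TD.constC_P 6 (by norm_num)]
    norm_num
  have t1 : P 9 ^ 4 * (P 18 ^ 2)⁻¹ = TD.thetaS 9 9 ^ 2 := by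
    apply TD.div_helper _ _ _ c18
    calc TD.thetaS 9 9 ^ 2 * P 18 ^ 2 = (TD.thetaS 9 9 * P 18) ^ 2 := by ring
      _ = (P 9 ^ 2) ^ 2 := by rw [TD.I1]
      _ = P 9 ^ 4 := by ring
  have key2 : TD.thetaS 9 9 * TD.thetaS 3 15 * P 6 = P 18 * P 9 * P 3 := by
    have hne : P 18 * P 9 ≠ 0 := mul_ne_zero (TD.P_ne 18 (by norm_num)) (TD.P_ne 9 (by norm_num))
    apply mul_right_cancel₀ hne
    calc (TD.thetaS 9 9 * TD.thetaS 3 15 * P 6) * (P 18 * P 9)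
        = (TD.thetaS 9 9 * P 18) * (TD.thetaS 3 15 * (P 6 * P 9)) := by ring
      _ = P 9 ^ 2 * (P 3 * P 18 ^ 2) := by rw [TD.I1, TD.I2]
      _ = (P 18 * P 9 * P 3) * (P 18 * P 9) := by ring
  have t2 : P 18 * P 9 * P 3 * (P 6)⁻¹ = TD.thetaS 9 9 * TD.thetaS 3 15 :=
    TD.div_helper _ _ _ c6 key2
  have key3 : TD.thetaS 3 15 ^ 2 * (P 9 ^ 2 * P 6 ^ 2) = P 18 ^ 4 * P 3 ^ 2 := by
    calc TD.thetaS 3 15 ^ 2 * (P 9 ^ 2 * P 6 ^ 2)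
        = (TD.thetaS 3 15 * (P 6 * P 9)) ^ 2 := by ring
      _ = (P 3 * P 18 ^ 2) ^ 2 := by rw [TD.I2]
      _ = P 18 ^ 4 * P 3 ^ 2 := by ring
  have t3 : P 18 ^ 4 * P 3 ^ 2 * (P 9 ^ 2 * P 6 ^ 2)⁻¹ = TD.thetaS 3 15 ^ 2 :=
    TD.div_helper _ _ _ c69 key3
  rw [t1, t2, t3, TD.S1]
  have hC : (PowerSeries.C (R := ℚ) 4 : TD.R) = (PowerSeries.C (R := ℚ) 2) * (PowerSeries.C (R := ℚ) 2) := by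
    rw [← map_mul]; norm_num
  have hC2 : (PowerSeries.C (R := ℚ) 2 : TD.R) = 2 := by
    rw [show (2:ℚ) = (1:ℚ)+1 by norm_num, map_add, map_one]
    norm_num
  rw [hC, hC2]
  ring
end
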